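/- arXiv:1202.2824 — 3 statements merged into one kernel-verified Lean document; each statement's English description precedes it below -/
import Mathlib

section
/- With A*_{m,α} f = Σ_{k,j} ((1/|Q_{j,α}^k|) ∫_{Q_j^k} f) χ_{Q_{j,α}^k}, where {Q_j^k} is a sparse family in the standard dyadic grid and Q_{j,α}^k ∈ D_α satisfies 2^m Q_j^k ⊆ Q_{j,α}^k and ℓ(Q_{j,α}^k) ≤ 6 · 2^m ℓ(Q_j^k), we have the weak-type bound ‖A*_{m,α} f‖_{L^{1,∞}} ≤ C(n) m ‖f‖_{L¹} for all f ∈ L¹(ℝⁿ) and m ∈ ℕ, m ≥ 1. -/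
open Set MeasureTheory ENNReal NNReal

/-- The shifted dyadic cube `2^{-k}([0,1)ⁿ + j + α)` of the grid `D_α`. -/
def sCube {n : ℕ} (α : Fin n → ℝ) (k : ℤ) (j : Fin n → ℤ) : Set (Fin n → ℝ) :=
  {x | ∀ i, (2:ℝ)^(-k) * ((j i : ℝ) + α i) ≤ x i ∧ x i < (2:ℝ)^(-k) * ((j i : ℝ) + 1 + α i)}

/-- The standard dyadic cube `2^{-k}([0,1)ⁿ + j)`. -/
def dCube {n : ℕ} (k : ℤ) (j : Fin n → ℤ) : Set (Fin n → ℝ) := sCube (fun _ => 0) k j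

/-- The concentric dilate `t·Q` of the dyadic cube `Q = dCube k j`. -/
def dilateD {n : ℕ} (k : ℤ) (j : Fin n → ℤ) (t : ℝ) : Set (Fin n → ℝ) :=
  {x | ∀ i, (2:ℝ)^(-k) * ((j i : ℝ) + 1/2) - t * (2:ℝ)^(-k) / 2 ≤ x i ∧
        x i < (2:ℝ)^(-k) * ((j i : ℝ) + 1/2) + t * (2:ℝ)^(-k) / 2}

/-- The formal adjoint `A*_{m,α} f = Σ_{k,j} ((1/|Q_{j,α}^k|)∫_{Q_j^k} f) χ_{Q_{j,α}^k}`. -/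
noncomputable def Astar {n : ℕ} (Q R : ℤ → ℕ → Set (Fin n → ℝ))
    (f : (Fin n → ℝ) → ℝ≥0∞) (x : Fin n → ℝ) : ℝ≥0∞ :=
  ∑' p : ℤ × ℕ,
    (R p.1 p.2).indicator (fun _ => (∫⁻ y in Q p.1 p.2, f y) / volume (R p.1 p.2)) x

namespace SP
variable {n : ℕ}

noncomputable def side (k : ℤ) : ℝ := (2:ℝ)^(-k)

lemma side_pos (k : ℤ) : 0 < side k := zpow_pos (by norm_num) _

lemma mem_sCube {α : Fin n → ℝ} {k : ℤ} {j : Fin n → ℤ} {x : Fin n → ℝ} :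
    x ∈ sCube α k j ↔ ∀ i, side k * ((j i : ℝ) + α i) ≤ x i ∧
      x i < side k * ((j i : ℝ) + α i) + side k := by
  unfold sCube side
  constructor <;> intro h <;> intro i <;> rcases h i with ⟨h1, h2⟩ <;>
    exact ⟨h1, by nlinarith [h1, h2]⟩

lemma sCube_eq_pi (α : Fin n → ℝ) (k : ℤ) (j : Fin n → ℤ) :
    sCube α k j = Set.pi Set.univ
      (fun i => Ico (side k * ((j i : ℝ) + α i)) (side k * ((j i : ℝ) + α i) + side k)) := by
  ext x
  simp only [Set.mem_pi, Set.mem_univ, forall_true_left, Set.mem_Ico]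
  exact mem_sCube

lemma measurableSet_sCube (α : Fin n → ℝ) (k : ℤ) (j : Fin n → ℤ) :
    MeasurableSet (sCube α k j) := by
  rw [sCube_eq_pi]
  exact MeasurableSet.univ_pi (fun i => measurableSet_Ico)

lemma volume_sCube (α : Fin n → ℝ) (k : ℤ) (j : Fin n → ℤ) :
    volume (sCube α k j) = (ENNReal.ofReal (side k))^n := by
  rw [sCube_eq_pi, volume_pi_pi]
  simp [Real.volume_Ico]

lemma sCube_nonempty (α : Fin n → ℝ) (k : ℤ) (j : Fin n → ℤ) :
    (sCube α k j).Nonempty := by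
  refine ⟨fun i => side k * ((j i : ℝ) + α i), mem_sCube.2 fun i => ⟨le_refl _, ?_⟩⟩
  linarith [side_pos k]

lemma mem_dCube {k : ℤ} {j : Fin n → ℤ} {x : Fin n → ℝ} :
    x ∈ dCube k j ↔ ∀ i, side k * (j i : ℝ) ≤ x i ∧ x i < side k * (j i : ℝ) + side k := by
  unfold dCube
  rw [mem_sCube]
  simp

lemma volume_dCube (k : ℤ) (j : Fin n → ℤ) :
    volume (dCube k j) = (ENNReal.ofReal (side k))^n := volume_sCube _ _ _

lemma measurableSet_dCube (k : ℤ) (j : Fin n → ℤ) : MeasurableSet (dCube k j) :=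
  measurableSet_sCube _ _ _

lemma dCube_nonempty (k : ℤ) (j : Fin n → ℤ) : (dCube k j).Nonempty :=
  sCube_nonempty _ _ _

lemma volume_dCube_pos (k : ℤ) (j : Fin n → ℤ) : 0 < volume (dCube k j) := by
  rw [volume_dCube]
  have : (0:ℝ≥0∞) < ENNReal.ofReal (side k) := by simp [ENNReal.ofReal_pos, side_pos]
  exact ENNReal.pow_pos this n

lemma volume_dCube_lt_top (k : ℤ) (j : Fin n → ℤ) : volume (dCube k j) < ⊤ := by
  rw [volume_dCube]
  exact ENNReal.pow_lt_top ofReal_lt_top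

lemma side_le_side_iff {k k' : ℤ} : side k ≤ side k' ↔ k' ≤ k := by
  unfold side
  rw [zpow_le_zpow_iff_right₀ (by norm_num : (1:ℝ) < 2)]
  omega

lemma side_mono {k k' : ℤ} (h : k ≤ k') : side k' ≤ side k := side_le_side_iff.2 h

/-- 1-D dyadic nesting. -/
lemma int_interval_subset {k k' : ℤ} {j j' : ℤ} (hk : k' ≤ k)
    (x : ℝ) (h1 : side k * j ≤ x) (h2 : x < side k * j + side k)
    (h3 : side k' * j' ≤ x) (h4 : x < side k' * j' + side k') :
    ∀ y : ℝ, side k * j ≤ y → y < side k * j + side k →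
      side k' * j' ≤ y ∧ y < side k' * j' + side k' := by
  have hd : side k' = side k * (2:ℝ)^((k - k').toNat) := by
    unfold side
    rw [← zpow_natCast (2:ℝ), ← zpow_add₀ (by norm_num : (2:ℝ) ≠ 0)]
    congr 1
    omega
  set d : ℕ := (k - k').toNat with hdd
  have hs := side_pos k
  have e1 : side k' * j' = side k * ((j':ℝ) * 2^d) := by rw [hd]; ring
  have e3 : side k' * j' + side k' = side k * (((j':ℝ) + 1) * 2^d) := by rw [hd]; ring
  have ha : (j' * 2^d : ℤ) ≤ j := by
    have h5 : side k * ((j':ℝ) * 2^d) < side k * ((j:ℝ) + 1) := by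
      rw [← e1]; nlinarith
    have h6 := lt_of_mul_lt_mul_left h5 (le_of_lt hs)
    have h7 : ((j' * 2^d : ℤ) : ℝ) < ((j + 1 : ℤ) : ℝ) := by push_cast; linarith
    have : (j' * 2^d : ℤ) < j + 1 := by exact_mod_cast h7
    omega
  have hb : (j + 1 : ℤ) ≤ (j' + 1) * 2^d := by
    have h5 : side k * (j:ℝ) < side k * (((j':ℝ) + 1) * 2^d) := by
      rw [← e3]; linarith
    have h6 := lt_of_mul_lt_mul_left h5 (le_of_lt hs)
    have h7 : ((j : ℤ) : ℝ) < (((j' + 1) * 2^d : ℤ) : ℝ) := by push_cast; linarith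
    have : (j : ℤ) < (j' + 1) * 2^d := by exact_mod_cast h7
    omega
  intro y hy1 hy2
  constructor
  · have hcast : ((j' * 2^d : ℤ) : ℝ) ≤ ((j : ℤ) : ℝ) := by exact_mod_cast ha
    have : side k * ((j':ℝ) * 2^d) ≤ side k * (j:ℝ) := by
      apply mul_le_mul_of_nonneg_left _ (le_of_lt hs)
      push_cast at hcast
      linarith
    rw [e1]
    linarith
  · have hcast : ((j + 1 : ℤ) : ℝ) ≤ (((j' + 1) * 2^d : ℤ) : ℝ) := by exact_mod_cast hb
    have : side k * ((j:ℝ) + 1) ≤ side k * (((j':ℝ) + 1) * 2^d) := by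
      apply mul_le_mul_of_nonneg_left _ (le_of_lt hs)
      push_cast at hcast
      linarith
    rw [e3]
    nlinarith

/-- Dyadic nesting: if cubes intersect and `k' ≤ k` then the smaller is inside the bigger. -/
lemma dCube_subset_of_inter {k k' : ℤ} {j j' : Fin n → ℤ} (hk : k' ≤ k)
    (h : (dCube k j ∩ dCube k' j').Nonempty) : dCube k j ⊆ dCube k' j' := by
  obtain ⟨x, hx1, hx2⟩ := h
  rw [mem_dCube] at hx1 hx2
  intro y hy
  rw [mem_dCube] at hy ⊢
  intro i
  exact int_interval_subset hk (x i) (hx1 i).1 (hx1 i).2 (hx2 i).1 (hx2 i).2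
    (y i) (hy i).1 (hy i).2

lemma dCube_disjoint_of_ne {k : ℤ} {j j' : Fin n → ℤ} (h : j ≠ j') :
    Disjoint (dCube k j) (dCube k j') := by
  rw [Set.disjoint_left]
  intro x hx hx'
  rw [mem_dCube] at hx hx'
  apply h
  funext i
  have h1 := hx i; have h2 := hx' i
  have hs := side_pos k
  have h3 : (j i : ℤ) < j' i + 1 := by
    have : side k * (j i : ℝ) < side k * ((j' i : ℝ) + 1) := by nlinarith [h1.1, h1.2, h2.1, h2.2]
    have := lt_of_mul_lt_mul_left this (le_of_lt hs)
    exact_mod_cast this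
  have h4 : (j' i : ℤ) < j i + 1 := by
    have : side k * (j' i : ℝ) < side k * ((j i : ℝ) + 1) := by nlinarith [h1.1, h1.2, h2.1, h2.2]
    have := lt_of_mul_lt_mul_left this (le_of_lt hs)
    exact_mod_cast this
  omega

/-- containment implies scale comparison (needs n ≥ 1) -/
lemma scale_le_of_subset (hn : 0 < n) {k k' : ℤ} {j j' : Fin n → ℤ}
    (h : dCube k j ⊆ dCube k' j') : k' ≤ k := by
  rw [← side_le_side_iff]
  by_contra hc
  push_neg at hc
  set i : Fin n := ⟨0, hn⟩
  set c : Fin n → ℝ := fun i' => side k * (j i' : ℝ) with hcdef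
  have hcmem : c ∈ dCube k j := by
    rw [mem_dCube]
    intro i'
    refine ⟨le_refl _, ?_⟩
    show side k * (j i' : ℝ) < side k * (j i' : ℝ) + side k
    linarith [side_pos k]
  have hcmem' := mem_dCube.1 (h hcmem)
  set y : Fin n → ℝ := Function.update c i (side k' * (j' i : ℝ) + side k') with hydef
  have hymem : y ∈ dCube k j := by
    rw [mem_dCube]
    intro i'
    by_cases hii : i' = i
    · rw [hii]
      simp only [hydef, Function.update_self]
      have hci : c i = side k * (j i : ℝ) := rfl
      constructor
      · have := (hcmem' i).2
        rw [hci] at this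
        linarith
      · have := (hcmem' i).1
        rw [hci] at this
        linarith [side_pos k']
    · simp only [hydef, Function.update_of_ne hii]
      exact (mem_dCube.1 hcmem) i'
  have hfin := ((mem_dCube.1 (h hymem)) i).2
  simp only [hydef, Function.update_self] at hfin
  linarith

lemma dCube_params_eq (hn : 0 < n) {k k' : ℤ} {j j' : Fin n → ℤ}
    (h : dCube k j = dCube (n := n) k' j') : k = k' ∧ j = j' := by
  have h1 : k' ≤ k := scale_le_of_subset hn (le_of_eq h)
  have h2 : k ≤ k' := scale_le_of_subset hn (le_of_eq h.symm)
  have hk : k = k' := le_antisymm h2 h1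
  subst hk
  refine ⟨rfl, ?_⟩
  by_contra hj
  have hdisj := dCube_disjoint_of_ne (n := n) (k := k) hj
  rw [h] at hdisj
  rw [disjoint_self] at hdisj
  exact (dCube_nonempty k j').ne_empty hdisj

/-- ancestor existence -/
lemma dCube_ancestor (k : ℤ) (j : Fin n → ℤ) {k' : ℤ} (h : k' ≤ k) :
    ∃ j' : Fin n → ℤ, dCube k j ⊆ dCube k' j' := by
  refine ⟨fun i => j i / 2^((k - k').toNat), ?_⟩
  set d : ℕ := (k - k').toNat with hdd
  have hd : side k' = side k * (2:ℝ)^d := by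
    unfold side
    rw [← zpow_natCast (2:ℝ), ← zpow_add₀ (by norm_num : (2:ℝ) ≠ 0)]
    congr 1
    omega
  have h2d : (0:ℤ) < 2^d := by positivity
  intro x hx
  rw [mem_dCube] at hx ⊢
  intro i
  obtain ⟨hx1, hx2⟩ := hx i
  set q : ℤ := j i / 2^d with hq
  have heq := Int.mul_ediv_add_emod (j i) (2^d)
  have hm1 : 0 ≤ j i % 2^d := Int.emod_nonneg _ (by positivity)
  have hm2 : j i % 2^d < 2^d := Int.emod_lt_of_pos _ h2d
  have hc0 : q * 2^d = 2^d * q := mul_comm _ _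
  have hdiv : q * 2^d ≤ j i := by linarith [heq, hm1]
  have hc1 : (q + 1) * 2^d = 2^d * q + 2^d := by ring
  have hdiv2 : j i + 1 ≤ (q + 1) * 2^d := by linarith [heq, hm2]
  have hcast1 : ((q * 2^d : ℤ) : ℝ) ≤ (j i : ℝ) := by exact_mod_cast hdiv
  have hcast2 : ((j i : ℝ) + 1) ≤ (((q + 1) * 2^d : ℤ) : ℝ) := by exact_mod_cast hdiv2
  push_cast at hcast1 hcast2
  have hs := side_pos k
  constructor
  · calc side k' * (q : ℝ) = side k * ((q:ℝ) * 2^d) := by rw [hd]; ring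
    _ ≤ side k * (j i : ℝ) := by
        apply mul_le_mul_of_nonneg_left _ (le_of_lt hs)
        linarith
    _ ≤ x i := hx1
  · calc x i < side k * (j i : ℝ) + side k := hx2
    _ = side k * ((j i : ℝ) + 1) := by ring
    _ ≤ side k * (((q:ℝ) + 1) * 2^d) := by
        apply mul_le_mul_of_nonneg_left _ (le_of_lt hs)
        linarith
    _ = side k' * (q:ℝ) + side k' := by rw [hd]; ring


lemma dCube_subset_dilateD {k : ℤ} {j : Fin n → ℤ} {t : ℝ} (ht : 1 ≤ t) :
    dCube k j ⊆ dilateD k j t := by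
  intro x hx
  rw [mem_dCube] at hx
  intro i
  obtain ⟨h1, h2⟩ := hx i
  have hs := side_pos k
  have hside : (2:ℝ)^(-k) = side k := rfl
  rw [hside]
  constructor
  · have : t * side k / 2 ≥ side k / 2 := by nlinarith
    nlinarith
  · have : t * side k / 2 ≥ side k / 2 := by nlinarith
    nlinarith

/-- The lower corner of a shifted cube. -/
noncomputable def lo (α : Fin n → ℝ) (k : ℤ) (j : Fin n → ℤ) : Fin n → ℝ :=
  fun i => side k * ((j i : ℝ) + α i)

lemma mem_sCube' {α : Fin n → ℝ} {k : ℤ} {j : Fin n → ℤ} {x : Fin n → ℝ} :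
    x ∈ sCube α k j ↔ ∀ i, lo α k j i ≤ x i ∧ x i < lo α k j i + side k := mem_sCube

/-- The tripled box around a box with lower corner `a` and side `s`. -/
def tri (a : Fin n → ℝ) (s : ℝ) : Set (Fin n → ℝ) :=
  Set.pi Set.univ fun i => Ico (a i - s) (a i + 2*s)

lemma measurableSet_tri (a : Fin n → ℝ) (s : ℝ) : MeasurableSet (tri a s) :=
  MeasurableSet.univ_pi (fun _ => measurableSet_Ico)

lemma volume_tri (a : Fin n → ℝ) {s : ℝ} (hs : 0 ≤ s) :
    volume (tri a s) = (ENNReal.ofReal 3)^n * (ENNReal.ofReal s)^n := by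
  rw [tri, volume_pi_pi]
  have : ∀ i : Fin n, volume (Ico (a i - s) (a i + 2*s)) = ENNReal.ofReal 3 * ENNReal.ofReal s := by
    intro i
    rw [Real.volume_Ico, ← ENNReal.ofReal_mul (by norm_num)]
    congr 1
    ring
  simp only [this]
  rw [Finset.prod_const, Finset.card_univ, Fintype.card_fin, mul_pow]

/-- If two shifted cubes intersect and the first has smaller side, the first is inside
the tripled box of the second. -/
lemma sCube_subset_tri {α1 α2 : Fin n → ℝ} {k1 k2 : ℤ} {j1 j2 : Fin n → ℤ}
    (hs : side k1 ≤ side k2) (h : (sCube α1 k1 j1 ∩ sCube α2 k2 j2).Nonempty) :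
    sCube α1 k1 j1 ⊆ tri (lo α2 k2 j2) (side k2) := by
  obtain ⟨x, hx1, hx2⟩ := h
  rw [mem_sCube'] at hx1 hx2
  intro y hy
  rw [mem_sCube'] at hy
  intro i _
  rw [Set.mem_Ico]
  obtain ⟨a1, b1⟩ := hx1 i
  obtain ⟨a2, b2⟩ := hx2 i
  obtain ⟨c1, c2⟩ := hy i
  constructor
  · -- y i ≥ lo1 i > x i - side k1 ≥ lo2 i - side k1 ≥ lo2 - side k2
    linarith
  · linarith

/-- Points of a common box near a point of `dCube kl jl` are in the tripled cube,
provided the box is smaller than the cube. -/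
lemma mem_tri_of_near {kl : ℤ} {jl : Fin n → ℤ} {q x : Fin n → ℝ}
    (hq : q ∈ dCube kl jl) (hx : ∀ i, |x i - q i| < side kl) :
    x ∈ tri (lo (fun _ => (0:ℝ)) kl jl) (side kl) := by
  rw [mem_dCube] at hq
  intro i _
  rw [Set.mem_Ico]
  obtain ⟨h1, h2⟩ := hq i
  have := hx i
  rw [abs_lt] at this
  unfold lo
  constructor
  · simp only [add_zero]
    linarith [this.1]
  · simp only [add_zero]
    linarith [this.2]

lemma dist_lt_of_mem_sCube {α : Fin n → ℝ} {k : ℤ} {j : Fin n → ℤ} {x q : Fin n → ℝ}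
    (hx : x ∈ sCube α k j) (hq : q ∈ sCube α k j) : ∀ i, |x i - q i| < side k := by
  intro i
  rw [mem_sCube'] at hx hq
  obtain ⟨a1, b1⟩ := hx i
  obtain ⟨a2, b2⟩ := hq i
  rw [abs_lt]
  constructor <;> linarith

/-- scale window arithmetic -/
lemma window_of_side_le {kl kp : ℤ} {m : ℕ} (h : side kl ≤ 6 * 2^m * side kp) :
    kp ≤ kl + m + 3 := by
  have h8 : (6:ℝ) * 2^m * side kp ≤ side (kp - m - 3) := by
    unfold side
    rw [show -(kp - (m:ℤ) - 3) = -kp + (m + 3 : ℤ) by ring,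
      zpow_add₀ (by norm_num : (2:ℝ) ≠ 0)]
    have : ((2:ℝ))^((m : ℤ) + 3) = 2^m * 8 := by
      rw [zpow_add₀ (by norm_num : (2:ℝ) ≠ 0), zpow_natCast]
      norm_num
    rw [this]
    nlinarith [zpow_pos (by norm_num : (0:ℝ) < 2) (-kp),
      (by positivity : (0:ℝ) < (2:ℝ)^m)]
  have := side_le_side_iff.1 (le_trans h h8)
  omega


/-! ### Maximal dyadic cubes -/

section Maximal
variable (f : (Fin n → ℝ) → ℝ≥0∞) (lam : ℝ≥0∞)

def isHigh (K : ℤ) (J : Fin n → ℤ) : Prop :=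
  lam * volume (dCube K J) < ∫⁻ x in dCube K J, f x

def isMax (K : ℤ) (J : Fin n → ℤ) : Prop :=
  isHigh f lam K J ∧ ∀ K' J', dCube K J ⊆ dCube (n := n) K' J' → isHigh f lam K' J' → K ≤ K'

variable {f lam}

lemma high_scale_bound (hn : 0 < n) (hlam0 : lam ≠ 0) (hlam : lam ≠ ⊤) (hF : ∫⁻ x, f x ≠ ⊤) :
    ∃ K₀ : ℤ, ∀ K J, isHigh f lam K J → K₀ < K := by
  have hdiv : (∫⁻ x, f x) / lam ≠ ⊤ :=
    (ENNReal.div_lt_top hF hlam0).ne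
  obtain ⟨N, hN⟩ := ENNReal.exists_nat_gt hdiv
  refine ⟨-(N:ℤ), ?_⟩
  intro K J hh
  by_contra hc
  push_neg at hc
  -- K ≤ -N, so side K = 2^(-K) ≥ 2^N
  have hsideN : (2:ℝ)^(N:ℕ) ≤ side K := by
    unfold side
    rw [← zpow_natCast (2:ℝ)]
    apply zpow_le_zpow_right₀ (by norm_num : (1:ℝ) ≤ 2)
    omega
  have hvol : ((N:ℝ≥0∞)) ≤ volume (dCube K J) := by
    rw [volume_dCube]
    calc (N:ℝ≥0∞) ≤ 2^(N:ℕ) := by exact_mod_cast (Nat.lt_two_pow_self (n := N)).le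
    _ = ENNReal.ofReal ((2:ℝ)^(N:ℕ)) := by
          rw [ENNReal.ofReal_pow (by norm_num)]
          norm_num
    _ ≤ ENNReal.ofReal (side K) := ENNReal.ofReal_le_ofReal hsideN
    _ ≤ (ENNReal.ofReal (side K))^n := by
          apply le_self_pow₀ ?_ (by omega)
          calc (1:ℝ≥0∞) = ENNReal.ofReal 1 := by norm_num
          _ ≤ ENNReal.ofReal ((2:ℝ)^(N:ℕ)) := ENNReal.ofReal_le_ofReal (one_le_pow₀ (by norm_num))
          _ ≤ ENNReal.ofReal (side K) := ENNReal.ofReal_le_ofReal hsideN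
  -- volume < F / lam
  have hvlt : volume (dCube K J) < (∫⁻ x, f x) / lam := by
    rw [ENNReal.lt_div_iff_mul_lt (Or.inl hlam0) (Or.inl hlam), mul_comm]
    exact lt_of_lt_of_le hh (setLIntegral_le_lintegral _ _)
  have := lt_of_le_of_lt hvol (lt_trans hvlt hN)
  exact absurd this (by exact_mod_cast lt_irrefl N)

lemma exists_isMax (hn : 0 < n) (hlam0 : lam ≠ 0) (hlam : lam ≠ ⊤) (hF : ∫⁻ x, f x ≠ ⊤)
    {K : ℤ} {J : Fin n → ℤ} (h : isHigh f lam K J) :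
    ∃ K' J', isMax f lam K' J' ∧ dCube K J ⊆ dCube (n := n) K' J' := by
  obtain ⟨K₀, hK₀⟩ := high_scale_bound hn hlam0 hlam hF
  suffices key : ∀ d : ℕ, ∀ K : ℤ, ∀ J : Fin n → ℤ, isHigh f lam K J → (K - K₀).toNat ≤ d →
      ∃ K' J', isMax f lam K' J' ∧ dCube K J ⊆ dCube (n := n) K' J' by
    exact key (K - K₀).toNat K J h le_rfl
  intro d
  induction d with
  | zero =>
      intro K J hh hle
      have := hK₀ K J hh
      omega
  | succ d ih =>
      intro K J hh hle
      by_cases hmax : ∀ K' J', dCube K J ⊆ dCube (n := n) K' J' → isHigh f lam K' J' → K ≤ K'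
      · exact ⟨K, J, ⟨hh, hmax⟩, subset_refl _⟩
      · push_neg at hmax
        obtain ⟨K', J', hsub, hhigh, hlt⟩ := hmax
        have hb := hK₀ K' J' hhigh
        obtain ⟨K'', J'', hm, hs⟩ := ih K' J' hhigh (by omega)
        exact ⟨K'', J'', hm, le_trans hsub hs⟩

lemma isMax_disjoint (hn : 0 < n) {p p' : ℤ × (Fin n → ℤ)}
    (hp : isMax f lam p.1 p.2) (hp' : isMax f lam p'.1 p'.2) (hne : p ≠ p') :
    Disjoint (dCube p.1 p.2) (dCube p'.1 p'.2) := by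
  by_contra hc
  rw [Set.not_disjoint_iff_nonempty_inter] at hc
  -- wlog via cases
  have key : ∀ q q' : ℤ × (Fin n → ℤ), isMax f lam q.1 q.2 → isMax f lam q'.1 q'.2 →
      (dCube q.1 q.2 ∩ dCube (n:=n) q'.1 q'.2).Nonempty → q.1 ≤ q'.1 → q = q' := by
    intro q q' hq hq' hint hle
    have hsub : dCube q'.1 q'.2 ⊆ dCube (n:=n) q.1 q.2 :=
      dCube_subset_of_inter hle (by rwa [Set.inter_comm] at hint)
    have h1 : q'.1 ≤ q.1 := hq'.2 q.1 q.2 hsub hq.1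
    have hkeq : q.1 = q'.1 := le_antisymm hle h1
    have : q.2 = q'.2 := by
      by_contra hj
      have hd := dCube_disjoint_of_ne (n := n) (k := q.1) hj
      rw [Set.disjoint_right] at hd
      obtain ⟨x, hx1, hx2⟩ := hint
      rw [← hkeq] at hx2
      exact hd hx2 hx1
    exact Prod.ext hkeq this
  rcases le_total p.1 p'.1 with hle | hle
  · exact hne (key p p' hp hp' hc hle)
  · exact hne.symm (key p' p hp' hp (by rwa [Set.inter_comm] at hc) hle)


lemma vol_sum_isMax (hn : 0 < n) (hlam0 : lam ≠ 0) (hlam : lam ≠ ⊤) :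
    ∑' (l : {q : ℤ × (Fin n → ℤ) // isMax f lam q.1 q.2}), volume (dCube l.1.1 l.1.2)
      ≤ (∫⁻ x, f x) / lam := by
  rw [ENNReal.le_div_iff_mul_le (Or.inl hlam0) (Or.inl hlam)]
  calc (∑' (l : {q : ℤ × (Fin n → ℤ) // isMax f lam q.1 q.2}), volume (dCube l.1.1 l.1.2)) * lam
      = ∑' (l : {q : ℤ × (Fin n → ℤ) // isMax f lam q.1 q.2}), lam * volume (dCube l.1.1 l.1.2) := by
        rw [← ENNReal.tsum_mul_right]
        congr 1
        funext l
        rw [mul_comm]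
    _ ≤ ∑' (l : {q : ℤ × (Fin n → ℤ) // isMax f lam q.1 q.2}), ∫⁻ x in dCube l.1.1 l.1.2, f x :=
        ENNReal.tsum_le_tsum (fun l => (l.2.1).le)
    _ = ∫⁻ x in ⋃ (l : {q : ℤ × (Fin n → ℤ) // isMax f lam q.1 q.2}), dCube l.1.1 l.1.2, f x := by
        rw [lintegral_iUnion (fun l => measurableSet_dCube _ _)]
        intro l l' hne
        exact isMax_disjoint hn l.2 l'.2 (fun h => hne (Subtype.ext h))
    _ ≤ ∫⁻ x, f x := setLIntegral_le_lintegral _ _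

end Maximal

/-! ### Sparse families -/

section Sparse
variable {Q : ℤ → ℕ → Set (Fin n → ℝ)}

lemma unions_mono (hnest : ∀ k, (⋃ j, Q (k+1) j) ⊆ ⋃ j, Q k j) :
    ∀ a b : ℤ, a ≤ b → (⋃ j, Q b j) ⊆ ⋃ j, Q a j := by
  have key : ∀ d : ℕ, ∀ a : ℤ, (⋃ j, Q (a + d) j) ⊆ ⋃ j, Q a j := by
    intro d
    induction d with
    | zero => intro a; simp
    | succ d ih =>
        intro a
        have : a + ((d:ℤ) + 1) = (a + 1) + d := by ring
        rw [show ((d + 1 : ℕ) : ℤ) = (d:ℤ) + 1 by push_cast; ring, this]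
        exact le_trans (ih (a+1)) (hnest a)
  intro a b hab
  have : b = a + ((b - a).toNat : ℤ) := by omega
  rw [this]
  exact key _ a

/-- The disjointified pieces of a sparse family. -/
def Epiece (Q : ℤ → ℕ → Set (Fin n → ℝ)) (p : ℤ × ℕ) : Set (Fin n → ℝ) :=
  Q p.1 p.2 \ (⋃ j, Q (p.1+1) j)

lemma Epiece_disjoint (hdisj : ∀ k, ∀ j j', j ≠ j' → Disjoint (Q k j) (Q k j'))
    (hnest : ∀ k, (⋃ j, Q (k+1) j) ⊆ ⋃ j, Q k j) :
    Pairwise (Function.onFun Disjoint (Epiece Q)) := by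
  have key : ∀ p p' : ℤ × ℕ, p.1 < p'.1 → Disjoint (Epiece Q p) (Epiece Q p') := by
    intro p p' hlt
    apply Set.disjoint_left.2
    intro x hx hx'
    have hx2 : x ∈ ⋃ j, Q (p.1+1) j := by
      apply unions_mono hnest (p.1+1) p'.1 (by omega)
      exact Set.mem_iUnion.2 ⟨p'.2, hx'.1⟩
    exact hx.2 hx2
  intro p p' hne
  obtain ⟨a, b⟩ := p
  obtain ⟨a', b'⟩ := p'
  rcases lt_trichotomy a a' with h | h | h
  · exact key (a,b) (a',b') h
  · subst h
    have hj : b ≠ b' := by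
      intro hj2
      exact hne (by rw [hj2])
    exact Set.disjoint_of_subset Set.diff_subset Set.diff_subset (hdisj a _ _ hj)
  · exact (key (a',b') (a,b) h).symm

lemma vol_le_two_Epiece (hhalf : ∀ k j, volume ((⋃ i, Q (k+1) i) ∩ Q k j) ≤ volume (Q k j) / 2)
    (hfin : ∀ k j, volume (Q k j) ≠ ⊤) (p : ℤ × ℕ) :
    volume (Q p.1 p.2) ≤ 2 * volume (Epiece Q p) := by
  have h1 := measure_le_inter_add_diff volume (Q p.1 p.2) (⋃ j, Q (p.1+1) j)
  have h2 : volume (Q p.1 p.2 ∩ ⋃ j, Q (p.1+1) j) ≤ volume (Q p.1 p.2) / 2 := by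
    rw [Set.inter_comm]
    exact hhalf p.1 p.2
  have h3 : volume (Q p.1 p.2) ≤ volume (Q p.1 p.2) / 2 + volume (Epiece Q p) := by
    calc volume (Q p.1 p.2) ≤ volume (Q p.1 p.2 ∩ ⋃ j, Q (p.1+1) j) + volume (Epiece Q p) := h1
    _ ≤ _ := add_le_add_left h2 _
  have h4 : volume (Q p.1 p.2) / 2 + volume (Q p.1 p.2) / 2
      ≤ volume (Q p.1 p.2) / 2 + volume (Epiece Q p) := by
    rw [ENNReal.add_halves]
    exact h3
  have h5 := (ENNReal.add_le_add_iff_left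
    ((ENNReal.div_lt_top (hfin p.1 p.2) (by norm_num)).ne)).1 h4
  calc volume (Q p.1 p.2) = 2 * (volume (Q p.1 p.2) / 2) := by
        rw [ENNReal.mul_div_cancel' (by norm_num) (by norm_num)]
  _ ≤ 2 * volume (Epiece Q p) := by
        exact mul_le_mul_right h5 2

/-- Key sparse-family volume bound: cubes of a sparse family contained in a common
measurable set `S` have total volume at most `2 volume S`. -/
lemma sparse_sum (hdisj : ∀ k, ∀ j j', j ≠ j' → Disjoint (Q k j) (Q k j'))
    (hnest : ∀ k, (⋃ j, Q (k+1) j) ⊆ ⋃ j, Q k j)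
    (hhalf : ∀ k j, volume ((⋃ i, Q (k+1) i) ∩ Q k j) ≤ volume (Q k j) / 2)
    (hmeas : ∀ k j, MeasurableSet (Q k j)) (hfin : ∀ k j, volume (Q k j) ≠ ⊤)
    (T : Set (ℤ × ℕ)) {S : Set (Fin n → ℝ)} (hS : MeasurableSet S)
    (hsub : ∀ p ∈ T, Q p.1 p.2 ⊆ S) :
    ∑' p : T, volume (Q (p:ℤ×ℕ).1 (p:ℤ×ℕ).2) ≤ 2 * volume S := by
  calc ∑' p : T, volume (Q (p:ℤ×ℕ).1 (p:ℤ×ℕ).2)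
      ≤ ∑' p : T, 2 * volume (Epiece Q (p:ℤ×ℕ)) :=
        ENNReal.tsum_le_tsum (fun p => vol_le_two_Epiece hhalf hfin _)
  _ = 2 * ∑' p : T, volume (Epiece Q (p:ℤ×ℕ)) := ENNReal.tsum_mul_left
  _ = 2 * volume (⋃ p : T, Epiece Q (p:ℤ×ℕ)) := by
        congr 1
        refine (measure_iUnion ?_
          (fun p => ((hmeas _ _).diff (MeasurableSet.iUnion (fun j => hmeas _ j))))).symm
        intro p p' hne
        have hne2 : (p:ℤ×ℕ) ≠ (p':ℤ×ℕ) := fun h => hne (Subtype.ext h)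
        exact Epiece_disjoint hdisj hnest hne2
  _ ≤ 2 * volume S := by
        apply mul_le_mul_right
        apply measure_mono
        apply Set.iUnion_subset
        intro p
        exact le_trans Set.diff_subset (hsub p p.2)

/-- In a sparse family, distinct indices carrying dyadic cubes of the same scale
have disjoint cubes. -/
lemma sparse_same_scale_disjoint
    (hdisj : ∀ k, ∀ j j', j ≠ j' → Disjoint (Q k j) (Q k j'))
    (hnest : ∀ k, (⋃ j, Q (k+1) j) ⊆ ⋃ j, Q k j)
    (hhalf : ∀ k j, volume ((⋃ i, Q (k+1) i) ∩ Q k j) ≤ volume (Q k j) / 2)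
    {p p' : ℤ × ℕ} (hne : p ≠ p') {K : ℤ} {J J' : Fin n → ℤ}
    (hp : Q p.1 p.2 = dCube K J) (hp' : Q p'.1 p'.2 = dCube K J') :
    Disjoint (Q p.1 p.2) (Q p'.1 p'.2) := by
  have key : ∀ q q' : ℤ × ℕ, q.1 < q'.1 → ∀ {J J' : Fin n → ℤ},
      Q q.1 q.2 = dCube K J → Q q'.1 q'.2 = dCube K J' → Disjoint (Q q.1 q.2) (Q q'.1 q'.2) := by
    intro q q' hlt J J' hq hq'
    by_cases hJ : J = J'
    · -- equal cubes: contradiction with sparseness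
      exfalso
      have hsub : Q q'.1 q'.2 ⊆ ⋃ i, Q (q.1+1) i := by
        apply le_trans ?_ (unions_mono hnest (q.1+1) q'.1 (by omega))
        exact Set.subset_iUnion (fun j => Q q'.1 j) q'.2
      have hv := hhalf q.1 q.2
      have hsub2 : Q q.1 q.2 ⊆ ⋃ i, Q (q.1+1) i := by
        rw [hq, hJ, ← hq']
        exact hsub
      have hcontra : volume (Q q.1 q.2) ≤ volume (Q q.1 q.2) / 2 := by
        calc volume (Q q.1 q.2) = volume ((⋃ i, Q (q.1+1) i) ∩ Q q.1 q.2) := by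
              congr 1
              exact (Set.inter_eq_right.2 hsub2).symm
        _ ≤ volume (Q q.1 q.2) / 2 := hv
      rw [hq] at hcontra
      have h0 := volume_dCube_pos K J
      have hT := volume_dCube_lt_top K J
      have : volume (dCube (n := n) K J) / 2 < volume (dCube (n := n) K J) := by
        apply ENNReal.half_lt_self h0.ne' hT.ne
      exact absurd hcontra (not_le.2 this)
    · rw [hq, hq']
      exact dCube_disjoint_of_ne hJ
  obtain ⟨a, b⟩ := p
  obtain ⟨a', b'⟩ := p'
  rcases lt_trichotomy a a' with h | h | h
  · exact key (a,b) (a',b') h hp hp'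
  · subst h
    have hj : b ≠ b' := fun hj2 => hne (by rw [hj2])
    exact hdisj a _ _ hj
  · exact (key (a',b') (a,b) h hp' hp).symm

end Sparse

/-! ### small ENNReal helpers -/

lemma ennreal_mul_le_sq_add_sq (a b : ℝ≥0∞) : 2 * (a * b) ≤ a^2 + b^2 := by
  rcases eq_or_ne a ⊤ with rfl | ha
  · rcases eq_or_ne b 0 with rfl | hb
    · simp
    · have : (⊤:ℝ≥0∞)^2 = ⊤ := by simp [pow_two]
      rw [this]
      exact le_top.trans_eq (top_add _).symm |>.trans_eq rfl
  rcases eq_or_ne b ⊤ with rfl | hb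
  · have : (⊤:ℝ≥0∞)^2 = ⊤ := by simp [pow_two]
    rw [this]
    simp
  lift a to ℝ≥0 using ha
  lift b to ℝ≥0 using hb
  rw [← ENNReal.coe_mul, ← ENNReal.coe_pow, ← ENNReal.coe_pow]
  rw [show ((2:ℝ≥0∞) * (↑(a*b))) = ((2 * (a*b) : ℝ≥0) : ℝ≥0∞) by push_cast; ring]
  rw [← ENNReal.coe_add, ENNReal.coe_le_coe]
  rw [← NNReal.coe_le_coe]
  push_cast
  nlinarith [sq_nonneg ((a:ℝ) - b)]


lemma ennreal_w_mul_v : ((3:ℝ≥0∞)/4) * ((4:ℝ≥0∞)/3) = 1 := by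
  rw [div_eq_mul_inv, div_eq_mul_inv]
  calc (3:ℝ≥0∞) * 4⁻¹ * (4 * 3⁻¹) = (3 * 3⁻¹) * (4⁻¹ * 4) := by ring
  _ = 1 * 1 := by
      rw [ENNReal.mul_inv_cancel (by norm_num) (by norm_num),
        ENNReal.inv_mul_cancel (by norm_num) (by norm_num)]
  _ = 1 := by ring

/-- weighted Cauchy–Schwarz for series, geometric weights -/
lemma tsum_sq_le (a : ℕ → ℝ≥0∞) :
    (∑' r, a r)^2 ≤ 4 * ∑' r, ((4:ℝ≥0∞)/3)^r * (a r)^2 := by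
  set w : ℝ≥0∞ := (3:ℝ≥0∞)/4 with hw
  set v : ℝ≥0∞ := (4:ℝ≥0∞)/3 with hv
  have hwv : w * v = 1 := ennreal_w_mul_v
  have hrepr : ∀ r, a r = w^r * (v^r * a r) := by
    intro r
    rw [← mul_assoc, ← mul_pow, hwv, one_pow, one_mul]
  set h : ℕ → ℝ≥0∞ := fun r => v^r * a r with hh
  -- double sum expansion
  have hdouble : (∑' r, a r)^2 = ∑' r, ∑' s, a r * a s := by
    rw [pow_two, ← ENNReal.tsum_mul_right]
    congr 1
    funext r
    rw [← ENNReal.tsum_mul_left]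
  have hstep : ∀ r s, 2 * (a r * a s) ≤ w^r * w^s * (h r)^2 + w^r * w^s * (h s)^2 := by
    intro r s
    have := ennreal_mul_le_sq_add_sq (h r) (h s)
    calc 2 * (a r * a s) = w^r * w^s * (2 * (h r * h s)) := by
          rw [hrepr r, hrepr s]
          show 2 * (w ^ r * h r * (w ^ s * h s)) = _
          ring
    _ ≤ w^r * w^s * ((h r)^2 + (h s)^2) := mul_le_mul_right this _
    _ = _ := by ring
  have hW : (∑' r, w^r) ≤ 4 := by
    rw [ENNReal.tsum_geometric]
    have hsum : (1:ℝ≥0∞) = 1/4 + 3/4 := by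
      rw [ENNReal.div_add_div_same, show (1:ℝ≥0∞) + 3 = 4 by norm_num]
      exact (ENNReal.div_self (by norm_num) (by norm_num)).symm
    have hne : ((3:ℝ≥0∞)/4) ≠ ⊤ := by
      simp [ENNReal.div_eq_top]
    have h1 : (1:ℝ≥0∞) - w = 1/4 := by
      rw [hw]
      exact ENNReal.sub_eq_of_eq_add hne hsum
    rw [h1, one_div, inv_inv]
  have hmain : 2 * (∑' r, a r)^2 ≤ 2 * ((∑' r, w^r) * ∑' r, w^r * (h r)^2) := by
    rw [hdouble]
    calc 2 * ∑' r, ∑' s, a r * a s = ∑' r, ∑' s, 2 * (a r * a s) := by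
          rw [← ENNReal.tsum_mul_left]
          congr 1
          funext r
          rw [← ENNReal.tsum_mul_left]
    _ ≤ ∑' r, ∑' s, (w^r * w^s * (h r)^2 + w^r * w^s * (h s)^2) :=
          ENNReal.tsum_le_tsum (fun r => ENNReal.tsum_le_tsum (fun s => hstep r s))
    _ = (∑' r, ∑' s, w^r * w^s * (h r)^2) + (∑' r, ∑' s, w^r * w^s * (h s)^2) := by
          rw [← ENNReal.tsum_add]
          congr 1
          funext r
          rw [← ENNReal.tsum_add]
    _ = 2 * ∑' r, ∑' s, w^r * w^s * (h r)^2 := by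
          rw [two_mul]
          congr 1
          rw [ENNReal.tsum_comm]
          congr 1
          funext r
          congr 1
          funext s
          ring
    _ = 2 * ((∑' r, w^r) * ∑' r, w^r * (h r)^2) := by
          congr 1
          calc ∑' (r : ℕ), ∑' (s : ℕ), w^r * w^s * (h r)^2
              = ∑' (r : ℕ), (w^r * (h r)^2) * ∑' (s : ℕ), w^s := by
                apply tsum_congr
                intro r
                rw [← ENNReal.tsum_mul_left]
                apply tsum_congr
                intro s
                ring
          _ = (∑' (r : ℕ), w^r * (h r)^2) * ∑' (s : ℕ), w^s := ENNReal.tsum_mul_right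
          _ = _ := mul_comm _ _
  have hcancel := (ENNReal.mul_le_mul_iff_right (a := 2) (by norm_num) (by norm_num)).1 hmain
  calc (∑' r, a r)^2 ≤ (∑' r, w^r) * ∑' r, w^r * (h r)^2 := hcancel
  _ ≤ 4 * ∑' r, w^r * (h r)^2 := mul_le_mul_left hW _
  _ = 4 * ∑' r, v^r * (a r)^2 := by
        congr 1
        apply tsum_congr
        intro r
        rw [hh]
        show w^r * (v^r * a r)^2 = v^r * (a r)^2
        rw [mul_pow, ← pow_mul, show r * 2 = r + r by ring, pow_add]
        calc w^r * (v^r * v^r * (a r)^2) = (w*v)^r * (v^r * (a r)^2) := by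
              rw [mul_pow]; ring
        _ = v^r * (a r)^2 := by rw [hwv, one_pow, one_mul]

/-- Chebyshev-style rearrangement helper -/
lemma cheb_helper {t mu C : ℝ≥0∞} (ht0 : t ≠ 0) (htop : t ≠ ⊤)
    (h : (t/2)*(t/2)*mu ≤ C * t) : t * mu ≤ 4 * C := by
  have h2 : (4:ℝ≥0∞) * 2⁻¹ * 2⁻¹ = 1 := by
    have hi : (2:ℝ≥0∞) * 2⁻¹ = 1 := ENNReal.mul_inv_cancel (by norm_num) (by norm_num)
    calc (4:ℝ≥0∞) * 2⁻¹ * 2⁻¹ = (2 * 2⁻¹) * (2 * 2⁻¹) := by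
          rw [show (4:ℝ≥0∞) = 2 * 2 by norm_num]
          ring
    _ = 1 := by rw [hi]; ring
  have htt : t⁻¹ * t = 1 := ENNReal.inv_mul_cancel ht0 htop
  have key : t * mu = (4 * t⁻¹) * ((t/2)*(t/2)*mu) := by
    rw [ENNReal.div_eq_inv_mul]
    calc t * mu = 1 * 1 * (t * mu) := by ring
    _ = ((4:ℝ≥0∞) * 2⁻¹ * 2⁻¹) * (t⁻¹ * t) * (t * mu) := by rw [h2, htt]
    _ = (4 * t⁻¹) * ((2⁻¹ * t) * (2⁻¹ * t) * mu) := by ring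
  rw [key]
  calc (4 * t⁻¹) * ((t/2)*(t/2)*mu) ≤ (4 * t⁻¹) * (C * t) := mul_le_mul_right h _
  _ = 4 * C * (t⁻¹ * t) := by ring
  _ = 4 * C := by rw [htt, mul_one]

lemma half_mul_helper {t mu C : ℝ≥0∞} (htop : t ≠ ⊤) (h : (t/2)*mu ≤ C) :
    t * mu ≤ 2 * C := by
  have : t * mu = 2 * ((t/2) * mu) := by
    rw [← mul_assoc, ENNReal.mul_div_cancel' (by norm_num) (by norm_num)]
  rw [this]
  exact mul_le_mul_right h _

end SP

namespace SP
variable {n : ℕ}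

/-- dimension-zero case -/
lemma dim_zero (α : Fin 0 → ℝ) (Q R : ℤ → ℕ → Set (Fin 0 → ℝ))
    (hdisj : ∀ k, ∀ j j', j ≠ j' → Disjoint (Q k j) (Q k j'))
    (hnest : ∀ k, (⋃ j, Q (k+1) j) ⊆ ⋃ j, Q k j)
    (hhalf : ∀ k j, volume ((⋃ i, Q (k+1) i) ∩ Q k j) ≤ volume (Q k j) / 2)
    (m : ℕ)
    (hQR : ∀ k j, (Q k j = ∅ ∧ R k j = ∅) ∨
        ∃ (K : ℤ) (J : Fin 0 → ℤ) (K' : ℤ) (J' : Fin 0 → ℤ),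
          Q k j = dCube K J ∧ R k j = sCube α K' J' ∧
          dilateD K J (2^m) ⊆ R k j ∧ (2:ℝ)^(-K') ≤ 6 * 2^m * (2:ℝ)^(-K))
    (f : (Fin 0 → ℝ) → ℝ≥0∞) (t : ℝ≥0∞) :
    t * volume {x | t < Astar Q R f x} ≤ ∫⁻ x, f x := by
  classical
  have hcube : ∀ (K : ℤ) (J : Fin 0 → ℤ), dCube K J = Set.univ := by
    intro K J
    ext x
    simp only [Set.mem_univ, iff_true]
    exact fun i => i.elim0
  have hscube : ∀ (K : ℤ) (J : Fin 0 → ℤ), sCube α K J = Set.univ := by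
    intro K J
    ext x
    simp only [Set.mem_univ, iff_true]
    exact fun i => i.elim0
  have hvuniv : volume (Set.univ : Set (Fin 0 → ℝ)) = 1 := by
    have : (Set.univ : Set (Fin 0 → ℝ)) = Set.pi Set.univ (fun i => Set.univ) := by
      simp
    rw [this, volume_pi_pi]
    simp
  -- at most one nontrivial index
  have hkey : ∀ p p' : ℤ × ℕ, Q p.1 p.2 ≠ ∅ → Q p'.1 p'.2 ≠ ∅ → p = p' := by
    intro p p' hp hp'
    have huQ : ∀ q : ℤ × ℕ, Q q.1 q.2 ≠ ∅ → Q q.1 q.2 = Set.univ := by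
      intro q hq
      rcases hQR q.1 q.2 with h | ⟨K, J, K', J', h1, _⟩
      · exact absurd h.1 hq
      · rw [h1, hcube]
    have key2 : ∀ q q' : ℤ × ℕ, Q q.1 q.2 = Set.univ → Q q'.1 q'.2 = Set.univ →
        q.1 < q'.1 → False := by
      intro q q' hq hq' hlt
      have hsub : Set.univ ⊆ ⋃ i, Q (q.1+1) i := by
        rw [← hq']
        refine le_trans ?_ (unions_mono hnest (q.1+1) q'.1 (by omega))
        exact Set.subset_iUnion (fun j => Q q'.1 j) q'.2
      have := hhalf q.1 q.2
      rw [hq, Set.inter_univ, Set.univ_subset_iff.1 hsub, hvuniv] at this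
      norm_num at this
    obtain ⟨a, b⟩ := p
    obtain ⟨a', b'⟩ := p'
    rcases lt_trichotomy a a' with h | h | h
    · exact absurd (key2 (a,b) (a',b') (huQ _ hp) (huQ _ hp') h) not_false
    · subst h
      by_contra hne
      have hb : b ≠ b' := fun h => hne (by rw [h])
      have hd := hdisj a b b' hb
      rw [huQ (a,b) hp, huQ (a,b') hp'] at hd
      rw [Set.disjoint_left] at hd
      exact hd (Set.mem_univ (default : Fin 0 → ℝ)) (Set.mem_univ (default : Fin 0 → ℝ))
    · exact absurd (key2 (a',b') (a,b) (huQ _ hp') (huQ _ hp) h) not_false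
  -- Astar ≤ ∫ f
  have hA : ∀ x, Astar Q R f x ≤ ∫⁻ y, f y := by
    intro x
    unfold Astar
    by_cases hex : ∃ p : ℤ × ℕ, Q p.1 p.2 ≠ ∅
    · obtain ⟨p₀, hp₀⟩ := hex
      have hz : ∀ p : ℤ × ℕ, p ≠ p₀ →
          (R p.1 p.2).indicator (fun _ => (∫⁻ y in Q p.1 p.2, f y) / volume (R p.1 p.2)) x = 0 := by
        intro p hne
        have hQp : Q p.1 p.2 = ∅ := by
          by_contra hc
          exact hne (hkey p p₀ hc hp₀)
        rcases hQR p.1 p.2 with h | ⟨K, J, K', J', h1, _⟩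
        · rw [h.2]
          simp
        · rw [h1, hcube] at hQp
          exact absurd hQp (by simp [Set.univ_nonempty.ne_empty])
      rw [tsum_eq_single p₀ hz]
      rcases hQR p₀.1 p₀.2 with h | ⟨K, J, K', J', h1, h2, _⟩
      · exact absurd h.1 hp₀
      · rw [h2, hscube]
        calc (Set.univ : Set (Fin 0 → ℝ)).indicator
              (fun _ => (∫⁻ y in Q p₀.1 p₀.2, f y) / volume (Set.univ : Set (Fin 0 → ℝ))) x
            = (∫⁻ y in Q p₀.1 p₀.2, f y) / volume (Set.univ : Set (Fin 0 → ℝ)) := by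
              rw [Set.indicator_univ]
        _ = ∫⁻ y in Q p₀.1 p₀.2, f y := by rw [hvuniv, div_one]
        _ ≤ ∫⁻ y, f y := setLIntegral_le_lintegral _ _
    · push_neg at hex
      have : ∀ p : ℤ × ℕ,
          (R p.1 p.2).indicator (fun _ => (∫⁻ y in Q p.1 p.2, f y) / volume (R p.1 p.2)) x = 0 := by
        intro p
        rcases hQR p.1 p.2 with h | ⟨K, J, K', J', h1, _⟩
        · rw [h.2]; simp
        · exact absurd (hex p) (by rw [h1, hcube]; simp [Set.univ_nonempty.ne_empty])
      simp only [this, tsum_zero]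
      exact zero_le
  by_cases ht : t < ∫⁻ y, f y
  · calc t * volume {x | t < Astar Q R f x} ≤ t * volume (Set.univ : Set (Fin 0 → ℝ)) :=
        mul_le_mul_right (measure_mono (Set.subset_univ _)) t
    _ = t := by rw [hvuniv, mul_one]
    _ ≤ ∫⁻ y, f y := ht.le
  · have : {x | t < Astar Q R f x} = ∅ := by
      ext x
      simp only [Set.mem_setOf_eq, Set.mem_empty_iff_false, iff_false, not_lt]
      exact le_trans (hA x) (not_lt.1 ht)
    rw [this]
    simp

end SP


open SP

/-- With `{Q_j^k}` sparse in the standard dyadic grid, `Q_{j,α}^k ∈ D_α`,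
`2^m Q_j^k ⊆ Q_{j,α}^k`, and `ℓ(Q_{j,α}^k) ≤ 6·2^m ℓ(Q_j^k)`, the weak-type bound
`‖A*_{m,α} f‖_{L^{1,∞}} ≤ C(n) m ‖f‖_{L¹}` holds for all `f ∈ L¹`, `f ≥ 0`, `m ≥ 1`. -/
theorem stmt14 (n : ℕ) :
    ∃ C : ℝ≥0, 0 < C ∧
      ∀ (m : ℕ), 1 ≤ m →
      ∀ (α : Fin n → ℝ), (∀ i, α i = 0 ∨ α i = 1/3) →
      ∀ (Q R : ℤ → ℕ → Set (Fin n → ℝ)),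
      (∀ k, ∀ j j', j ≠ j' → Disjoint (Q k j) (Q k j')) →
      (∀ k, (⋃ j, Q (k+1) j) ⊆ ⋃ j, Q k j) →
      (∀ k j, volume ((⋃ i, Q (k+1) i) ∩ Q k j) ≤ volume (Q k j) / 2) →
      (∀ k j, (Q k j = ∅ ∧ R k j = ∅) ∨
        ∃ (K : ℤ) (J : Fin n → ℤ) (K' : ℤ) (J' : Fin n → ℤ),
          Q k j = dCube K J ∧ R k j = sCube α K' J' ∧
          dilateD K J (2^m) ⊆ R k j ∧ (2:ℝ)^(-K') ≤ 6 * 2^m * (2:ℝ)^(-K)) →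
      ∀ (f : (Fin n → ℝ) → ℝ≥0∞), Measurable f → (∫⁻ x, f x < ⊤) →
      ∀ t : ℝ≥0∞,
        t * volume {x | t < Astar Q R f x} ≤ C * m * ∫⁻ x, f x := by
  classical
  refine ⟨3^n * 2^11, by positivity, ?_⟩
  intro m hm α hα Q R hdisj hnest hhalf hQR f hf hfint t
  have hCcast : (((3:ℝ≥0)^n * 2^11 : ℝ≥0) : ℝ≥0∞) = (3:ℝ≥0∞)^n * 2^11 := by
    push_cast
    ring
  have hCm1 : (1:ℝ≥0∞) ≤ ((3^n * 2^11 : ℝ≥0) : ℝ≥0∞) * (m:ℝ≥0∞) := by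
    rw [hCcast]
    have hm1 : (1:ℝ≥0∞) ≤ (m:ℝ≥0∞) := by exact_mod_cast hm
    calc (1:ℝ≥0∞) = 1 * 1 := by norm_num
    _ ≤ (3:ℝ≥0∞)^n * 2^11 * (m:ℝ≥0∞) := by
        apply mul_le_mul' ?_ hm1
        calc (1:ℝ≥0∞) = 1 * 1 := by norm_num
        _ ≤ (3:ℝ≥0∞)^n * 2^11 := mul_le_mul' (one_le_pow₀ (by norm_num)) (by norm_num)
  rcases Nat.eq_zero_or_pos n with hn0 | hn
  · subst hn0
    calc t * volume {x | t < Astar Q R f x} ≤ ∫⁻ x, f x :=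
        SP.dim_zero α Q R hdisj hnest hhalf m hQR f t
    _ ≤ ((3^0 * 2^11 : ℝ≥0) : ℝ≥0∞) * (m:ℝ≥0∞) * ∫⁻ x, f x := by
        conv_lhs => rw [← one_mul (∫⁻ x, f x)]
        exact mul_le_mul_left hCm1 _
  rcases eq_or_ne t 0 with rfl | ht0
  · simp
  rcases eq_or_ne t ⊤ with rfl | htop
  · have hempty : {x | (⊤:ℝ≥0∞) < Astar Q R f x} = ∅ := by
      ext x
      simp
    rw [hempty]
    simp
  have hFne : (∫⁻ x, f x) ≠ ⊤ := hfint.ne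
  -- extract cube data
  have hQR2 : ∀ p : ℤ × ℕ, ∃ (a : ℤ) (b : Fin n → ℤ) (a' : ℤ) (b' : Fin n → ℤ),
      (Q p.1 p.2 = ∅ ∧ R p.1 p.2 = ∅) ∨
      (Q p.1 p.2 = dCube a b ∧ R p.1 p.2 = sCube α a' b' ∧
        dilateD a b (2^m) ⊆ R p.1 p.2 ∧ SP.side a' ≤ 6 * 2^m * SP.side a) := by
    intro p
    rcases hQR p.1 p.2 with h | ⟨K, J, K', J', h1, h2, h3, h4⟩
    · exact ⟨0, fun _ => 0, 0, fun _ => 0, Or.inl h⟩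
    · exact ⟨K, J, K', J', Or.inr ⟨h1, h2, h3, h4⟩⟩
  choose KQ JQ KR JR hdata using hQR2
  have hD : ∀ p : ℤ × ℕ, Q p.1 p.2 ≠ ∅ →
      Q p.1 p.2 = dCube (KQ p) (JQ p) ∧ R p.1 p.2 = sCube α (KR p) (JR p) ∧
        dilateD (KQ p) (JQ p) (2^m) ⊆ R p.1 p.2 ∧ SP.side (KR p) ≤ 6 * 2^m * SP.side (KQ p) :=
    fun p hp => (hdata p).resolve_left (fun h => hp h.1)
  have hQmeas : ∀ k j, MeasurableSet (Q k j) := by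
    intro k j
    rcases hdata (k, j) with h | h
    · rw [show Q k j = ∅ from h.1]
      exact MeasurableSet.empty
    · rw [show Q k j = dCube (KQ (k,j)) (JQ (k,j)) from h.1]
      exact measurableSet_dCube _ _
  have hQfin : ∀ k j, volume (Q k j) ≠ ⊤ := by
    intro k j
    rcases hdata (k, j) with h | h
    · rw [show Q k j = ∅ from h.1]
      simp
    · rw [show Q k j = dCube (KQ (k,j)) (JQ (k,j)) from h.1]
      exact (volume_dCube_lt_top _ _).ne
  have hRmeas : ∀ p : ℤ × ℕ, MeasurableSet (R p.1 p.2) := by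
    intro p
    rcases hdata p with h | h
    · rw [h.2]
      exact MeasurableSet.empty
    · rw [h.2.1]
      exact measurableSet_sCube _ _ _
  have hQsubR : ∀ p : ℤ × ℕ, Q p.1 p.2 ≠ ∅ → Q p.1 p.2 ⊆ R p.1 p.2 := by
    intro p hp
    obtain ⟨h1, h2, h3, h4⟩ := hD p hp
    rw [h1]
    refine le_trans ?_ h3
    exact dCube_subset_dilateD (one_le_pow₀ (by norm_num : (1:ℝ) ≤ 2))
  have hRvol : ∀ p : ℤ × ℕ, Q p.1 p.2 ≠ ∅ →
      volume (R p.1 p.2) = (ENNReal.ofReal (SP.side (KR p)))^n := by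
    intro p hp
    rw [(hD p hp).2.1]
    exact volume_sCube _ _ _
  have hRpos : ∀ p : ℤ × ℕ, Q p.1 p.2 ≠ ∅ → volume (R p.1 p.2) ≠ 0 := by
    intro p hp
    rw [hRvol p hp]
    exact (ENNReal.pow_pos (by simp [ENNReal.ofReal_pos, side_pos]) n).ne'
  have hRfin : ∀ p : ℤ × ℕ, Q p.1 p.2 ≠ ∅ → volume (R p.1 p.2) ≠ ⊤ := by
    intro p hp
    rw [hRvol p hp]
    exact (ENNReal.pow_lt_top ofReal_lt_top).ne
  have hQpos : ∀ p : ℤ × ℕ, Q p.1 p.2 ≠ ∅ → volume (Q p.1 p.2) ≠ 0 := by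
    intro p hp
    rw [(hD p hp).1]
    exact (volume_dCube_pos _ _).ne'
  set c : ℤ × ℕ → ℝ≥0∞ := fun p => (∫⁻ y in Q p.1 p.2, f y) / volume (R p.1 p.2) with hc
  have hcmul : ∀ p : ℤ × ℕ, Q p.1 p.2 ≠ ∅ →
      c p * volume (R p.1 p.2) = ∫⁻ y in Q p.1 p.2, f y :=
    fun p hp => ENNReal.div_mul_cancel (hRpos p hp) (hRfin p hp)
  set isB : ℤ × ℕ → Prop := fun p => Q p.1 p.2 ≠ ∅ ∧
    ∃ l : ℤ × (Fin n → ℤ), SP.isMax f t l.1 l.2 ∧ Q p.1 p.2 ⊆ dCube l.1 l.2 with hisB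
  set isG : ℤ × ℕ → Prop := fun p => Q p.1 p.2 ≠ ∅ ∧
    ¬∃ l : ℤ × (Fin n → ℤ), SP.isMax f t l.1 l.2 ∧ Q p.1 p.2 ⊆ dCube l.1 l.2 with hisG
  set cls : ℤ × ℕ → ℕ → Prop := fun p r => isG p ∧
    t * volume (Q p.1 p.2) < 2^(r+1) * ∫⁻ y in Q p.1 p.2, f y ∧
    2^r * (∫⁻ y in Q p.1 p.2, f y) ≤ t * volume (Q p.1 p.2) with hcls
  set Gr : ℕ → (Fin n → ℝ) → ℝ≥0∞ := fun r x => ∑' p : ℤ × ℕ,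
    if cls p r then (R p.1 p.2).indicator (fun _ => c p) x else 0 with hGrdef
  set Bf : (Fin n → ℝ) → ℝ≥0∞ := fun x => ∑' p : ℤ × ℕ,
    if isB p then (R p.1 p.2).indicator (fun _ => c p) x else 0 with hBfdef
  set Hf : (Fin n → ℝ) → ℝ≥0∞ := fun x => ∑' r : ℕ, Gr r x with hHfdef
  set Om : Set (Fin n → ℝ) := ⋃ l : {q : ℤ × (Fin n → ℤ) // SP.isMax f t q.1 q.2},
    SP.tri (SP.lo (fun _ => (0:ℝ)) l.1.1 l.1.2) (SP.side l.1.1) with hOmdef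
  have hGrmeas : ∀ r, Measurable (Gr r) := by
    intro r
    apply Measurable.ennreal_tsum
    intro p
    by_cases h : cls p r
    · simp only [if_pos h]
      exact measurable_const.indicator (hRmeas p)
    · simp only [if_neg h]
      exact measurable_const
  have hBmeas : Measurable Bf := by
    apply Measurable.ennreal_tsum
    intro p
    by_cases h : isB p
    · simp only [if_pos h]
      exact measurable_const.indicator (hRmeas p)
    · simp only [if_neg h]
      exact measurable_const
  have hHmeas : Measurable Hf := Measurable.ennreal_tsum hGrmeas
  have hOmmeas : MeasurableSet Om := MeasurableSet.iUnion (fun l => measurableSet_tri _ _)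
  -- class membership for good cubes with positive integral
  have hclsex : ∀ p : ℤ × ℕ, isG p → (∫⁻ y in Q p.1 p.2, f y) ≠ 0 → ∃ r : ℕ, cls p r := by
    intro p hg hz
    have hp : Q p.1 p.2 ≠ ∅ := hg.1
    have hfinQ : (∫⁻ y in Q p.1 p.2, f y) ≠ ⊤ :=
      (lt_of_le_of_lt (setLIntegral_le_lintegral _ _) hfint).ne
    have hnothigh : ¬ (t * volume (Q p.1 p.2) < ∫⁻ y in Q p.1 p.2, f y) := by
      intro hcon
      apply hg.2
      have hhigh : SP.isHigh f t (KQ p) (JQ p) := by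
        unfold SP.isHigh
        rw [← (hD p hp).1]
        exact hcon
      obtain ⟨K', J', hmax, hsub⟩ := SP.exists_isMax hn ht0 htop hFne hhigh
      exact ⟨(K', J'), hmax, by rw [(hD p hp).1]; exact hsub⟩
    have hmulfin : t * volume (Q p.1 p.2) ≠ ⊤ := ENNReal.mul_ne_top htop (hQfin p.1 p.2)
    have hex : ∃ r : ℕ, t * volume (Q p.1 p.2) < 2^(r+1) * ∫⁻ y in Q p.1 p.2, f y := by
      have hdivfin : (t * volume (Q p.1 p.2)) / (∫⁻ y in Q p.1 p.2, f y) ≠ ⊤ :=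
        (ENNReal.div_lt_top hmulfin hz).ne
      obtain ⟨N, hN⟩ := ENNReal.exists_nat_gt hdivfin
      refine ⟨N, ?_⟩
      have h1 : t * volume (Q p.1 p.2) < N * ∫⁻ y in Q p.1 p.2, f y := by
        rw [← ENNReal.div_lt_iff (Or.inl hz) (Or.inl hfinQ)]
        exact hN
      refine lt_of_lt_of_le h1 (mul_le_mul_left ?_ _)
      calc (N:ℝ≥0∞) ≤ 2^N := by exact_mod_cast (Nat.lt_two_pow_self (n := N)).le
      _ ≤ 2^(N+1) := by
            rw [pow_succ]
            exact le_mul_of_one_le_right (zero_le) (by norm_num)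
    refine ⟨Nat.find hex, ?_⟩
    simp only [hcls]
    refine ⟨hg, Nat.find_spec hex, ?_⟩
    rcases Nat.eq_zero_or_pos (Nat.find hex) with h0 | hpos
    · rw [h0, pow_zero, one_mul]
      exact not_lt.1 hnothigh
    · have hmin := Nat.find_min hex (m := Nat.find hex - 1) (by omega)
      rw [not_lt, show Nat.find hex - 1 + 1 = Nat.find hex by omega] at hmin
      exact hmin
  have hRempty : ∀ p : ℤ × ℕ, Q p.1 p.2 = ∅ → R p.1 p.2 = ∅ := by
    intro p hp
    rcases hdata p with h | h
    · exact h.2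
    · rw [hp] at h
      exact absurd h.1.symm (dCube_nonempty _ _).ne_empty
  -- pointwise splitting
  have hsplit : ∀ x, Astar Q R f x ≤ Hf x + Bf x := by
    intro x
    have hterm : ∀ p : ℤ × ℕ, (R p.1 p.2).indicator (fun _ => c p) x ≤
        (if isG p then (R p.1 p.2).indicator (fun _ => c p) x else 0) +
        (if isB p then (R p.1 p.2).indicator (fun _ => c p) x else 0) := by
      intro p
      by_cases hp : Q p.1 p.2 = ∅
      · rw [hRempty p hp]
        simp
      · by_cases hb : ∃ l : ℤ × (Fin n → ℤ), SP.isMax f t l.1 l.2 ∧ Q p.1 p.2 ⊆ dCube l.1 l.2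
        · have hBp : isB p := by
            simp only [hisB]
            exact ⟨hp, hb⟩
          rw [if_pos hBp]
          exact le_add_self
        · have hGp : isG p := by
            simp only [hisG]
            exact ⟨hp, hb⟩
          rw [if_pos hGp]
          exact le_self_add
    have hAst : Astar Q R f x = ∑' p : ℤ × ℕ, (R p.1 p.2).indicator (fun _ => c p) x := rfl
    have hAG : Astar Q R f x ≤
        (∑' p : ℤ × ℕ, if isG p then (R p.1 p.2).indicator (fun _ => c p) x else 0) +
        (∑' p : ℤ × ℕ, if isB p then (R p.1 p.2).indicator (fun _ => c p) x else 0) := by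
      rw [hAst, ← ENNReal.tsum_add]
      exact ENNReal.tsum_le_tsum hterm
    refine le_trans hAG (add_le_add_left ?_ _)
    have hpt : ∀ p : ℤ × ℕ, (if isG p then (R p.1 p.2).indicator (fun _ => c p) x else 0) ≤
        ∑' r : ℕ, (if cls p r then (R p.1 p.2).indicator (fun _ => c p) x else 0) := by
      intro p
      by_cases hg : isG p
      · rw [if_pos hg]
        by_cases hz : (∫⁻ y in Q p.1 p.2, f y) = 0
        · have hc0 : c p = 0 := by
            simp only [hc, hz, ENNReal.zero_div]
          rw [hc0]
          simp
        · obtain ⟨r, hr⟩ := hclsex p hg hz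
          calc (R p.1 p.2).indicator (fun _ => c p) x
              = (if cls p r then (R p.1 p.2).indicator (fun _ => c p) x else 0) := by
                rw [if_pos hr]
          _ ≤ _ := ENNReal.le_tsum r
      · rw [if_neg hg]
        exact zero_le
    calc (∑' p : ℤ × ℕ, if isG p then (R p.1 p.2).indicator (fun _ => c p) x else 0)
        ≤ ∑' p : ℤ × ℕ, ∑' r : ℕ,
            (if cls p r then (R p.1 p.2).indicator (fun _ => c p) x else 0) :=
          ENNReal.tsum_le_tsum hpt
    _ = ∑' r : ℕ, ∑' p : ℤ × ℕ,
            (if cls p r then (R p.1 p.2).indicator (fun _ => c p) x else 0) :=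
          ENNReal.tsum_comm
    _ = Hf x := rfl
  -- square function estimate for each class
  have hpow0 : ∀ r : ℕ, ((2:ℝ≥0∞)^r) ≠ 0 := fun r => pow_ne_zero r (by norm_num)
  have hpowT : ∀ r : ℕ, ((2:ℝ≥0∞)^r) ≠ ⊤ := fun r => ENNReal.pow_ne_top (by norm_num)
  have hclsle : ∀ r : ℕ, ∀ p : ℤ × ℕ, cls p r →
      (∫⁻ y in Q p.1 p.2, f y) ≤ ((2^r : ℝ≥0∞))⁻¹ * t * volume (Q p.1 p.2) := by
    intro r p h
    have h2 := h.2.2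
    calc (∫⁻ y in Q p.1 p.2, f y)
        = ((2^r:ℝ≥0∞))⁻¹ * (2^r * ∫⁻ y in Q p.1 p.2, f y) := by
          rw [← mul_assoc, ENNReal.inv_mul_cancel (hpow0 r) (hpowT r), one_mul]
    _ ≤ ((2^r:ℝ≥0∞))⁻¹ * (t * volume (Q p.1 p.2)) := mul_le_mul_right h2 _
    _ = ((2^r:ℝ≥0∞))⁻¹ * t * volume (Q p.1 p.2) := by ring
  have hGr2 : ∀ r : ℕ, (∫⁻ x, (Gr r x)^2) ≤ 16 * 3^n * ((2^r : ℝ≥0∞))⁻¹ * t * ∫⁻ x, f x := by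
    intro r
    set e : ℤ × ℕ → (Fin n → ℝ) → ℝ≥0∞ := fun p x =>
      if cls p r then (R p.1 p.2).indicator (fun _ => c p) x else 0 with hedef
    have hemeas : ∀ p, Measurable (e p) := by
      intro p
      by_cases h : cls p r
      · simp only [hedef, if_pos h]
        exact measurable_const.indicator (hRmeas p)
      · simp only [hedef, if_neg h]
        exact measurable_const
    -- expand the square
    have hexp : (∫⁻ x, (Gr r x)^2) = ∑' p : ℤ×ℕ, ∑' s : ℤ×ℕ, ∫⁻ x, e p x * e s x := by
      have hsq : ∀ x, (Gr r x)^2 = ∑' p : ℤ×ℕ, ∑' s : ℤ×ℕ, e p x * e s x := by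
        intro x
        calc (Gr r x)^2 = ∑' p : ℤ×ℕ, (e p x * ∑' s : ℤ×ℕ, e s x) := by
              rw [pow_two, ← ENNReal.tsum_mul_right]
        _ = ∑' p : ℤ×ℕ, ∑' s : ℤ×ℕ, e p x * e s x :=
              tsum_congr (fun p => (ENNReal.tsum_mul_left).symm)
      calc ∫⁻ x, (Gr r x)^2 = ∫⁻ x, ∑' p : ℤ×ℕ, ∑' s : ℤ×ℕ, e p x * e s x :=
            lintegral_congr hsq
      _ = ∑' p : ℤ×ℕ, ∫⁻ x, ∑' s : ℤ×ℕ, e p x * e s x :=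
            lintegral_tsum (fun p =>
              (Measurable.ennreal_tsum (fun s => (hemeas p).mul (hemeas s))).aemeasurable)
      _ = ∑' p : ℤ×ℕ, ∑' s : ℤ×ℕ, ∫⁻ x, e p x * e s x :=
            tsum_congr (fun p => lintegral_tsum (fun s => ((hemeas p).mul (hemeas s)).aemeasurable))
    have hprod : ∀ p s : ℤ×ℕ, (∫⁻ x, e p x * e s x) =
        (if cls p r ∧ cls s r then c p * c s * volume (R p.1 p.2 ∩ R s.1 s.2) else 0) := by
      intro p s
      by_cases hp : cls p r
      · by_cases hs : cls s r
        · simp only [hedef, if_pos hp, if_pos hs, if_pos (And.intro hp hs)]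
          have hind : ∀ x, (R p.1 p.2).indicator (fun _ => c p) x *
              (R s.1 s.2).indicator (fun _ => c s) x
              = (R p.1 p.2 ∩ R s.1 s.2).indicator (fun _ => c p * c s) x := by
            intro x
            by_cases h1 : x ∈ R p.1 p.2 <;> by_cases h2 : x ∈ R s.1 s.2 <;>
              simp [Set.indicator_apply, h1, h2, Set.mem_inter_iff]
          rw [lintegral_congr hind, lintegral_indicator ((hRmeas p).inter (hRmeas s)),
            setLIntegral_const]
        · simp only [hedef, if_neg hs, if_neg (fun hc : cls p r ∧ cls s r => hs hc.2), mul_zero,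
            lintegral_zero]
      · simp only [hedef, if_neg hp, if_neg (fun hc : cls p r ∧ cls s r => hp hc.1), zero_mul,
          lintegral_zero]
    set D : ℤ×ℕ → ℤ×ℕ → ℝ≥0∞ := fun p s =>
      if cls p r ∧ cls s r ∧ SP.side (KR s) ≤ SP.side (KR p)
      then c p * c s * volume (R p.1 p.2 ∩ R s.1 s.2) else 0 with hDdef
    have hWD : ∀ p s : ℤ×ℕ,
        (if cls p r ∧ cls s r then c p * c s * volume (R p.1 p.2 ∩ R s.1 s.2) else 0)
        ≤ D p s + D s p := by
      intro p s
      by_cases h : cls p r ∧ cls s r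
      · rw [if_pos h]
        rcases le_total (SP.side (KR s)) (SP.side (KR p)) with hle | hle
        · refine le_trans ?_ le_self_add
          simp only [hDdef, if_pos (And.intro h.1 (And.intro h.2 hle))]
          exact le_refl _
        · refine le_trans ?_ le_add_self
          simp only [hDdef, if_pos (And.intro h.2 (And.intro h.1 hle))]
          rw [Set.inter_comm]
          ring_nf
          exact le_refl _
      · rw [if_neg h]
        exact zero_le
    -- inner sum bound
    have hinner : ∀ p : ℤ×ℕ, (∑' s : ℤ×ℕ, D p s) ≤
        (if cls p r then ((2^r:ℝ≥0∞))⁻¹ * t * (2 * (3^n * volume (R p.1 p.2))) * c p else 0) := by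
      intro p
      by_cases hp : cls p r
      case neg =>
        have hzero : ∀ s, D p s = 0 := by
          intro s
          simp only [hDdef]
          rw [if_neg (fun hc => hp hc.1)]
        rw [if_neg hp]
        simp [hzero]
      rw [if_pos hp]
      have hD_le : ∀ s : ℤ×ℕ, D p s ≤
          (if cls s r ∧ Q s.1 s.2 ⊆ SP.tri (SP.lo α (KR p) (JR p)) (SP.side (KR p))
           then c s * volume (R s.1 s.2) else 0) * c p := by
        intro s
        simp only [hDdef]
        by_cases h : cls p r ∧ cls s r ∧ SP.side (KR s) ≤ SP.side (KR p)
        · rw [if_pos h]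
          obtain ⟨h1, h2, h3⟩ := h
          by_cases hz : volume (R p.1 p.2 ∩ R s.1 s.2) = 0
          · rw [hz, mul_zero]
            exact zero_le
          · have hne : (sCube α (KR s) (JR s) ∩ sCube α (KR p) (JR p)).Nonempty := by
              rw [← (hD s h2.1.1).2.1, ← (hD p h1.1.1).2.1, Set.inter_comm]
              exact nonempty_of_measure_ne_zero hz
            have hTs : R s.1 s.2 ⊆ SP.tri (SP.lo α (KR p) (JR p)) (SP.side (KR p)) := by
              rw [(hD s h2.1.1).2.1]
              exact sCube_subset_tri h3 hne
            have hsT : cls s r ∧ Q s.1 s.2 ⊆ SP.tri (SP.lo α (KR p) (JR p)) (SP.side (KR p)) :=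
              ⟨h2, subset_trans (hQsubR s h2.1.1) hTs⟩
            rw [if_pos hsT]
            calc c p * c s * volume (R p.1 p.2 ∩ R s.1 s.2)
                ≤ c p * c s * volume (R s.1 s.2) :=
                  mul_le_mul_right (measure_mono Set.inter_subset_right) _
            _ = (c s * volume (R s.1 s.2)) * c p := by ring
        · rw [if_neg h]
          exact zero_le
      calc (∑' s : ℤ×ℕ, D p s)
          ≤ ∑' s : ℤ×ℕ, (if cls s r ∧ Q s.1 s.2 ⊆ SP.tri (SP.lo α (KR p) (JR p)) (SP.side (KR p))
              then c s * volume (R s.1 s.2) else 0) * c p := ENNReal.tsum_le_tsum hD_le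
      _ = (∑' s : ℤ×ℕ, (if cls s r ∧ Q s.1 s.2 ⊆ SP.tri (SP.lo α (KR p) (JR p)) (SP.side (KR p))
              then c s * volume (R s.1 s.2) else 0)) * c p := ENNReal.tsum_mul_right
      _ ≤ (((2^r:ℝ≥0∞))⁻¹ * t * (2 * (3^n * volume (R p.1 p.2)))) * c p := by
          apply mul_le_mul_left
          calc (∑' s : ℤ×ℕ, (if cls s r ∧ Q s.1 s.2 ⊆ SP.tri (SP.lo α (KR p) (JR p))
                  (SP.side (KR p)) then c s * volume (R s.1 s.2) else 0))
              ≤ ∑' s : ℤ×ℕ, (if cls s r ∧ Q s.1 s.2 ⊆ SP.tri (SP.lo α (KR p) (JR p))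
                  (SP.side (KR p)) then ((2^r:ℝ≥0∞))⁻¹ * t * volume (Q s.1 s.2) else 0) := by
                apply ENNReal.tsum_le_tsum
                intro s
                by_cases hsT : cls s r ∧ Q s.1 s.2 ⊆ SP.tri (SP.lo α (KR p) (JR p))
                    (SP.side (KR p))
                · rw [if_pos hsT, if_pos hsT, hcmul s hsT.1.1.1]
                  exact hclsle r s hsT.1
                · rw [if_neg hsT, if_neg hsT]
          _ = ((2^r:ℝ≥0∞))⁻¹ * t * ∑' s : ℤ×ℕ, (if cls s r ∧ Q s.1 s.2 ⊆ SP.tri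
                  (SP.lo α (KR p) (JR p)) (SP.side (KR p)) then volume (Q s.1 s.2) else 0) := by
                rw [← ENNReal.tsum_mul_left]
                apply tsum_congr
                intro s
                by_cases hsT : cls s r ∧ Q s.1 s.2 ⊆ SP.tri (SP.lo α (KR p) (JR p))
                    (SP.side (KR p))
                · rw [if_pos hsT, if_pos hsT]
                · rw [if_neg hsT, if_neg hsT, mul_zero]
          _ ≤ ((2^r:ℝ≥0∞))⁻¹ * t * (2 * volume (SP.tri (SP.lo α (KR p) (JR p))
                  (SP.side (KR p)))) := by
                apply mul_le_mul_right
                have hsubsum : (∑' s : ℤ×ℕ, if cls s r ∧ Q s.1 s.2 ⊆ SP.tri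
                      (SP.lo α (KR p) (JR p)) (SP.side (KR p)) then volume (Q s.1 s.2) else 0)
                    = ∑' s : ↥{s : ℤ×ℕ | cls s r ∧ Q s.1 s.2 ⊆ SP.tri (SP.lo α (KR p) (JR p))
                      (SP.side (KR p))}, volume (Q (s:ℤ×ℕ).1 (s:ℤ×ℕ).2) := by
                  rw [tsum_subtype {s : ℤ×ℕ | cls s r ∧ Q s.1 s.2 ⊆ SP.tri
                    (SP.lo α (KR p) (JR p)) (SP.side (KR p))} (fun s => volume (Q s.1 s.2))]
                  apply tsum_congr
                  intro s
                  simp [Set.indicator_apply]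
                rw [hsubsum]
                exact sparse_sum hdisj hnest hhalf hQmeas hQfin _ (measurableSet_tri _ _)
                  (fun s hs => hs.2)
          _ = ((2^r:ℝ≥0∞))⁻¹ * t * (2 * (3^n * volume (R p.1 p.2))) := by
                congr 2
                rw [volume_tri _ (side_pos _).le, hRvol p hp.1.1]
                congr 1
                norm_num
    -- the class sum
    have hclssum : (∑' p : ℤ×ℕ, if cls p r then (∫⁻ y in Q p.1 p.2, f y) else 0)
        ≤ 4 * ∫⁻ x, f x := by
      have hlamr0 : t / 2^(r+1) ≠ 0 := by
        simp only [Ne, ENNReal.div_eq_zero_iff, not_or]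
        exact ⟨ht0, hpowT (r+1)⟩
      have hlamrT : t / 2^(r+1) ≠ ⊤ := (ENNReal.div_lt_top htop (hpow0 (r+1))).ne
      have hhighr : ∀ p : ℤ×ℕ, cls p r → Q p.1 p.2 ⊆
          ⋃ l : {q : ℤ × (Fin n → ℤ) // SP.isMax f (t / 2^(r+1)) q.1 q.2},
            dCube l.1.1 l.1.2 := by
        intro p h
        have hp := h.1.1
        have hhigh : SP.isHigh f (t / 2^(r+1)) (KQ p) (JQ p) := by
          unfold SP.isHigh
          rw [← (hD p hp).1]
          have heq : t / 2^(r+1) * volume (Q p.1 p.2)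
              = (t * volume (Q p.1 p.2)) / 2^(r+1) := by
            rw [div_eq_mul_inv, div_eq_mul_inv]
            ring
          rw [heq, ENNReal.div_lt_iff (Or.inl (hpow0 (r+1))) (Or.inl (hpowT (r+1)))]
          calc t * volume (Q p.1 p.2) < 2^(r+1) * ∫⁻ y in Q p.1 p.2, f y := h.2.1
          _ = (∫⁻ y in Q p.1 p.2, f y) * 2^(r+1) := mul_comm _ _
        obtain ⟨K', J', hmax, hsub⟩ := exists_isMax hn hlamr0 hlamrT hFne hhigh
        intro y hy
        refine Set.mem_iUnion.2 ⟨⟨(K', J'), hmax⟩, hsub ?_⟩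
        rw [← (hD p hp).1]
        exact hy
      have hOmrvol : volume (⋃ l : {q : ℤ × (Fin n → ℤ) // SP.isMax f (t / 2^(r+1)) q.1 q.2},
          dCube l.1.1 l.1.2) ≤ (∫⁻ x, f x) / (t / 2^(r+1)) :=
        le_trans (measure_iUnion_le _) (vol_sum_isMax hn hlamr0 hlamrT)
      calc (∑' p : ℤ×ℕ, if cls p r then (∫⁻ y in Q p.1 p.2, f y) else 0)
          ≤ ∑' p : ℤ×ℕ, (if cls p r then ((2^r:ℝ≥0∞))⁻¹ * t * volume (Q p.1 p.2) else 0) := by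
            apply ENNReal.tsum_le_tsum
            intro p
            by_cases hp : cls p r
            · rw [if_pos hp, if_pos hp]
              exact hclsle r p hp
            · rw [if_neg hp, if_neg hp]
      _ = ((2^r:ℝ≥0∞))⁻¹ * t * ∑' p : ℤ×ℕ, (if cls p r then volume (Q p.1 p.2) else 0) := by
            rw [← ENNReal.tsum_mul_left]
            apply tsum_congr
            intro p
            by_cases hp : cls p r
            · rw [if_pos hp, if_pos hp]
            · rw [if_neg hp, if_neg hp, mul_zero]
      _ ≤ ((2^r:ℝ≥0∞))⁻¹ * t * (2 * volume (⋃ l : {q : ℤ × (Fin n → ℤ) //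
              SP.isMax f (t / 2^(r+1)) q.1 q.2}, dCube l.1.1 l.1.2)) := by
            apply mul_le_mul_right
            have hsubsum : (∑' p : ℤ×ℕ, if cls p r then volume (Q p.1 p.2) else 0)
                = ∑' p : ↥{p : ℤ×ℕ | cls p r}, volume (Q (p:ℤ×ℕ).1 (p:ℤ×ℕ).2) := by
              rw [tsum_subtype {p : ℤ×ℕ | cls p r} (fun p => volume (Q p.1 p.2))]
              apply tsum_congr
              intro p
              simp [Set.indicator_apply]
            rw [hsubsum]
            exact sparse_sum hdisj hnest hhalf hQmeas hQfin _
              (MeasurableSet.iUnion (fun l => measurableSet_dCube _ _))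
              (fun p hp => hhighr p hp)
      _ ≤ ((2^r:ℝ≥0∞))⁻¹ * t * (2 * ((∫⁻ x, f x) / (t / 2^(r+1)))) :=
            mul_le_mul_right (mul_le_mul_right hOmrvol _) _
      _ = ((2^r:ℝ≥0∞))⁻¹ * t * (2 * ((∫⁻ x, f x) * (2^(r+1) * t⁻¹))) := by
            rw [div_eq_mul_inv (∫⁻ x, f x) (t / 2^(r+1)),
              ENNReal.inv_div (Or.inl (hpowT (r+1))) (Or.inl (hpow0 (r+1))),
              div_eq_mul_inv ((2:ℝ≥0∞)^(r+1)) t]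
      _ = (((2^r:ℝ≥0∞))⁻¹ * 2^(r+1)) * 2 * (t⁻¹ * t) * ∫⁻ x, f x := by
            ring
      _ = 4 * ∫⁻ x, f x := by
            rw [show ((2:ℝ≥0∞)^r)⁻¹ * 2^(r+1) = 2 by
                rw [pow_succ, ← mul_assoc, ENNReal.inv_mul_cancel (hpow0 r) (hpowT r), one_mul],
              ENNReal.inv_mul_cancel ht0 htop]
            ring
    -- assemble
    calc (∫⁻ x, (Gr r x)^2)
        = ∑' p : ℤ×ℕ, ∑' s : ℤ×ℕ, ∫⁻ x, e p x * e s x := hexp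
    _ = ∑' p : ℤ×ℕ, ∑' s : ℤ×ℕ, (if cls p r ∧ cls s r then
          c p * c s * volume (R p.1 p.2 ∩ R s.1 s.2) else 0) :=
          tsum_congr (fun p => tsum_congr (fun s => hprod p s))
    _ ≤ ∑' p : ℤ×ℕ, ∑' s : ℤ×ℕ, (D p s + D s p) :=
          ENNReal.tsum_le_tsum (fun p => ENNReal.tsum_le_tsum (fun s => hWD p s))
    _ = (∑' p : ℤ×ℕ, ∑' s : ℤ×ℕ, D p s) + ∑' p : ℤ×ℕ, ∑' s : ℤ×ℕ, D s p := by
          rw [← ENNReal.tsum_add]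
          apply tsum_congr
          intro p
          rw [← ENNReal.tsum_add]
    _ = 2 * ∑' p : ℤ×ℕ, ∑' s : ℤ×ℕ, D p s := by
          rw [two_mul]
          congr 1
          exact ENNReal.tsum_comm
    _ ≤ 2 * ∑' p : ℤ×ℕ, (if cls p r then ((2^r:ℝ≥0∞))⁻¹ * t *
          (2 * (3^n * volume (R p.1 p.2))) * c p else 0) :=
          mul_le_mul_right (ENNReal.tsum_le_tsum hinner) _
    _ = 2 * (((2^r:ℝ≥0∞))⁻¹ * t * (2 * 3^n) *
          ∑' p : ℤ×ℕ, (if cls p r then (∫⁻ y in Q p.1 p.2, f y) else 0)) := by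
          congr 1
          rw [← ENNReal.tsum_mul_left]
          apply tsum_congr
          intro p
          by_cases hp : cls p r
          · rw [if_pos hp, if_pos hp]
            calc ((2^r:ℝ≥0∞))⁻¹ * t * (2 * (3^n * volume (R p.1 p.2))) * c p
                = ((2^r:ℝ≥0∞))⁻¹ * t * (2 * 3^n) * (c p * volume (R p.1 p.2)) := by ring
            _ = ((2^r:ℝ≥0∞))⁻¹ * t * (2 * 3^n) * (∫⁻ y in Q p.1 p.2, f y) := by
                rw [hcmul p hp.1.1]
          · rw [if_neg hp, if_neg hp, mul_zero]
    _ ≤ 2 * (((2^r:ℝ≥0∞))⁻¹ * t * (2 * 3^n) * (4 * ∫⁻ x, f x)) :=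
          mul_le_mul_right (mul_le_mul_right hclssum _) _
    _ = 16 * 3^n * ((2^r : ℝ≥0∞))⁻¹ * t * ∫⁻ x, f x := by ring
  -- bad part integral estimate
  have hBint : (∫⁻ x, (Omᶜ).indicator Bf x) ≤ ((m:ℝ≥0∞) + 4) * ∫⁻ x, f x := by
    set sel : ℤ × ℕ → {q : ℤ × (Fin n → ℤ) // SP.isMax f t q.1 q.2} × Fin (m+4) → Prop :=
      fun p li => Q p.1 p.2 ≠ ∅ ∧ Q p.1 p.2 ⊆ dCube li.1.1.1 li.1.1.2 ∧
        KQ p = li.1.1.1 + ((li.2 : ℕ) : ℤ) with hseldef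
    have h1 : (∫⁻ x, (Omᶜ).indicator Bf x) =
        ∑' p : ℤ × ℕ, (if isB p then c p * volume (R p.1 p.2 ∩ Omᶜ) else 0) := by
      rw [lintegral_indicator hOmmeas.compl]
      simp only [hBfdef]
      rw [lintegral_tsum]
      · apply tsum_congr
        intro p
        by_cases hb : isB p
        · simp only [if_pos hb]
          rw [lintegral_indicator (hRmeas p), setLIntegral_const,
            Measure.restrict_apply (hRmeas p)]
        · simp only [if_neg hb]
          exact lintegral_zero
      · intro p
        by_cases hb : isB p
        · simp only [if_pos hb]
          exact (measurable_const.indicator (hRmeas p)).aemeasurable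
        · simp only [if_neg hb]
          exact measurable_const.aemeasurable
    have h2 : ∀ p : ℤ × ℕ, (if isB p then c p * volume (R p.1 p.2 ∩ Omᶜ) else 0) ≤
        ∑' li : {q : ℤ × (Fin n → ℤ) // SP.isMax f t q.1 q.2} × Fin (m+4),
          (if sel p li then ∫⁻ y in Q p.1 p.2, f y else 0) := by
      intro p
      by_cases hb : isB p
      case neg =>
        rw [if_neg hb]
        exact zero_le
      rw [if_pos hb]
      by_cases hz : volume (R p.1 p.2 ∩ Omᶜ) = 0
      · rw [hz, mul_zero]
        exact zero_le
      obtain ⟨x, hxR, hxO⟩ := nonempty_of_measure_ne_zero hz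
      have hb' : Q p.1 p.2 ≠ ∅ ∧ ∃ l : ℤ × (Fin n → ℤ), SP.isMax f t l.1 l.2 ∧
          Q p.1 p.2 ⊆ dCube l.1 l.2 := hb
      obtain ⟨hp, l0, hmax, hsubl⟩ := hb'
      have hQc := (hD p hp).1
      have hRc := (hD p hp).2.1
      have hsz := (hD p hp).2.2.2
      obtain ⟨q, hqQ⟩ := dCube_nonempty (KQ p) (JQ p)
      have hqQp : q ∈ Q p.1 p.2 := by rw [hQc]; exact hqQ
      have hqR : q ∈ R p.1 p.2 := hQsubR p hp hqQp
      have hdist : ∀ i, |x i - q i| < SP.side (KR p) := by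
        have hx' : x ∈ sCube α (KR p) (JR p) := by rw [← hRc]; exact hxR
        have hq' : q ∈ sCube α (KR p) (JR p) := by rw [← hRc]; exact hqR
        exact dist_lt_of_mem_sCube hx' hq'
      have hwin : SP.side l0.1 ≤ 6 * 2^m * SP.side (KQ p) := by
        by_contra hcon
        push_neg at hcon
        apply hxO
        have hxtri : x ∈ SP.tri (SP.lo (fun _ => (0:ℝ)) l0.1 l0.2) (SP.side l0.1) := by
          apply mem_tri_of_near (hsubl hqQp)
          intro i
          exact lt_of_lt_of_le (hdist i) (le_trans hsz hcon.le)
        exact Set.mem_iUnion.2 ⟨⟨l0, hmax⟩, hxtri⟩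
      have hscale : l0.1 ≤ KQ p := scale_le_of_subset hn (by rw [← hQc]; exact hsubl)
      have hup : KQ p ≤ l0.1 + m + 3 := window_of_side_le hwin
      have hilt : (KQ p - l0.1).toNat < m + 4 := by omega
      have hsel2 : sel p (⟨l0, hmax⟩, ⟨(KQ p - l0.1).toNat, hilt⟩) := by
        refine ⟨hp, hsubl, ?_⟩
        show KQ p = l0.1 + (((KQ p - l0.1).toNat : ℕ) : ℤ)
        omega
      calc c p * volume (R p.1 p.2 ∩ Omᶜ) ≤ c p * volume (R p.1 p.2) :=
            mul_le_mul_right (measure_mono Set.inter_subset_left) _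
      _ = ∫⁻ y in Q p.1 p.2, f y := hcmul p hp
      _ = (if sel p (⟨l0, hmax⟩, ⟨(KQ p - l0.1).toNat, hilt⟩) then ∫⁻ y in Q p.1 p.2, f y else 0) :=
            (if_pos hsel2).symm
      _ ≤ _ := ENNReal.le_tsum
            (f := fun li : {q : ℤ × (Fin n → ℤ) // SP.isMax f t q.1 q.2} × Fin (m+4) =>
              if sel p li then ∫⁻ y in Q p.1 p.2, f y else 0)
            (⟨l0, hmax⟩, ⟨(KQ p - l0.1).toNat, hilt⟩)
    have h4 : ∀ li : {q : ℤ × (Fin n → ℤ) // SP.isMax f t q.1 q.2} × Fin (m+4),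
        (∑' p : ℤ × ℕ, if sel p li then ∫⁻ y in Q p.1 p.2, f y else 0)
        ≤ ∫⁻ y in dCube li.1.1.1 li.1.1.2, f y := by
      intro li
      have hsub : (∑' p : ℤ × ℕ, if sel p li then (∫⁻ y in Q p.1 p.2, f y) else 0)
          = ∑' p : ↥{p : ℤ × ℕ | sel p li}, ∫⁻ y in Q (p:ℤ×ℕ).1 (p:ℤ×ℕ).2, f y := by
        rw [tsum_subtype {p : ℤ × ℕ | sel p li} (fun p => ∫⁻ y in Q p.1 p.2, f y)]
        apply tsum_congr
        intro p
        simp [Set.indicator_apply, Set.mem_setOf_eq]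
      rw [hsub]
      have hdisj2 : Pairwise (Function.onFun Disjoint
          (fun p : ↥{p : ℤ × ℕ | sel p li} => Q (p:ℤ×ℕ).1 (p:ℤ×ℕ).2)) := by
        intro p p' hne
        have hne2 : (p:ℤ×ℕ) ≠ (p':ℤ×ℕ) := fun h => hne (Subtype.ext h)
        have hp : sel (p:ℤ×ℕ) li := p.2
        have hp' : sel (p':ℤ×ℕ) li := p'.2
        simp only [hseldef] at hp hp'
        apply sparse_same_scale_disjoint hdisj hnest hhalf hne2
          (K := li.1.1.1 + ((li.2 : ℕ) : ℤ)) (J := JQ (p:ℤ×ℕ)) (J' := JQ (p':ℤ×ℕ))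
        · rw [(hD _ hp.1).1, hp.2.2]
        · rw [(hD _ hp'.1).1, hp'.2.2]
      rw [← lintegral_iUnion (fun p => hQmeas _ _) hdisj2 f]
      apply lintegral_mono_set
      apply Set.iUnion_subset
      intro p
      exact p.2.2.1
    have h6 : ∑' l : {q : ℤ × (Fin n → ℤ) // SP.isMax f t q.1 q.2},
        ∫⁻ y in dCube l.1.1 l.1.2, f y ≤ ∫⁻ y, f y := by
      rw [← lintegral_iUnion (fun l => measurableSet_dCube _ _)
        (fun l l' hne => isMax_disjoint hn l.2 l'.2 (fun h => hne (Subtype.ext h)))]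
      exact setLIntegral_le_lintegral _ _
    calc (∫⁻ x, (Omᶜ).indicator Bf x)
        = ∑' p : ℤ × ℕ, (if isB p then c p * volume (R p.1 p.2 ∩ Omᶜ) else 0) := h1
    _ ≤ ∑' p : ℤ × ℕ, ∑' li : {q : ℤ × (Fin n → ℤ) // SP.isMax f t q.1 q.2} × Fin (m+4),
          (if sel p li then ∫⁻ y in Q p.1 p.2, f y else 0) := ENNReal.tsum_le_tsum h2
    _ = ∑' li : {q : ℤ × (Fin n → ℤ) // SP.isMax f t q.1 q.2} × Fin (m+4),
          ∑' p : ℤ × ℕ, (if sel p li then ∫⁻ y in Q p.1 p.2, f y else 0) := ENNReal.tsum_comm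
    _ ≤ ∑' li : {q : ℤ × (Fin n → ℤ) // SP.isMax f t q.1 q.2} × Fin (m+4),
          ∫⁻ y in dCube li.1.1.1 li.1.1.2, f y := ENNReal.tsum_le_tsum h4
    _ = ∑' l : {q : ℤ × (Fin n → ℤ) // SP.isMax f t q.1 q.2}, ∑' _i : Fin (m+4),
          ∫⁻ y in dCube l.1.1 l.1.2, f y := by
        exact ENNReal.tsum_prod
          (f := fun (l : {q : ℤ × (Fin n → ℤ) // SP.isMax f t q.1 q.2}) (_i : Fin (m+4)) =>
            ∫⁻ y in dCube l.1.1 l.1.2, f y)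
    _ = ((m:ℝ≥0∞) + 4) * ∑' l : {q : ℤ × (Fin n → ℤ) // SP.isMax f t q.1 q.2},
          ∫⁻ y in dCube l.1.1 l.1.2, f y := by
        rw [← ENNReal.tsum_mul_left]
        apply tsum_congr
        intro l
        rw [tsum_fintype, Finset.sum_const, Finset.card_univ, Fintype.card_fin, nsmul_eq_mul]
        congr 1
        push_cast
        ring
    _ ≤ ((m:ℝ≥0∞) + 4) * ∫⁻ y, f y := mul_le_mul_right h6 _
  -- volume of the exceptional set
  have hOmvol : t * volume Om ≤ 3^n * ∫⁻ x, f x := by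
    have h1 : volume Om ≤ ∑' l : {q : ℤ × (Fin n → ℤ) // SP.isMax f t q.1 q.2},
        volume (SP.tri (SP.lo (fun _ => (0:ℝ)) l.1.1 l.1.2) (SP.side l.1.1)) :=
      measure_iUnion_le _
    have h2 : ∀ l : {q : ℤ × (Fin n → ℤ) // SP.isMax f t q.1 q.2},
        volume (SP.tri (SP.lo (fun _ => (0:ℝ)) l.1.1 l.1.2) (SP.side l.1.1)) =
          3^n * volume (dCube l.1.1 l.1.2) := by
      intro l
      rw [volume_tri _ (side_pos _).le, volume_dCube]
      congr 1
      norm_num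
    calc t * volume Om
        ≤ t * ∑' l : {q : ℤ × (Fin n → ℤ) // SP.isMax f t q.1 q.2},
            3^n * volume (dCube l.1.1 l.1.2) := by
          apply mul_le_mul_right
          refine le_trans h1 (le_of_eq (tsum_congr h2))
    _ = 3^n * (t * ∑' l : {q : ℤ × (Fin n → ℤ) // SP.isMax f t q.1 q.2},
            volume (dCube l.1.1 l.1.2)) := by
          rw [ENNReal.tsum_mul_left]
          ring
    _ ≤ 3^n * (t * ((∫⁻ x, f x) / t)) := by
          apply mul_le_mul_right
          exact mul_le_mul_right (vol_sum_isMax hn ht0 htop) t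
    _ ≤ 3^n * ∫⁻ x, f x := mul_le_mul_right mul_div_le _
  -- assemble: square function bound
  have hH2 : (∫⁻ x, (Hf x)^2) ≤ 192 * 3^n * t * ∫⁻ x, f x := by
    have hpt : ∀ x, (Hf x)^2 ≤ 4 * ∑' r : ℕ, ((4:ℝ≥0∞)/3)^r * (Gr r x)^2 := by
      intro x
      exact tsum_sq_le _
    have hms : ∀ r : ℕ, Measurable (fun x => ((4:ℝ≥0∞)/3)^r * (Gr r x)^2) :=
      fun r => ((hGrmeas r).pow_const 2).const_mul _
    calc ∫⁻ x, (Hf x)^2 ≤ ∫⁻ x, 4 * ∑' r : ℕ, ((4:ℝ≥0∞)/3)^r * (Gr r x)^2 := lintegral_mono hpt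
    _ = 4 * ∑' r : ℕ, ((4:ℝ≥0∞)/3)^r * ∫⁻ x, (Gr r x)^2 := by
        rw [lintegral_const_mul 4 (Measurable.ennreal_tsum hms)]
        congr 1
        rw [lintegral_tsum (fun r => (hms r).aemeasurable)]
        apply tsum_congr
        intro r
        rw [lintegral_const_mul _ ((hGrmeas r).pow_const 2)]
    _ ≤ 4 * ∑' r : ℕ, ((4:ℝ≥0∞)/3)^r * (16 * 3^n * ((2^r : ℝ≥0∞))⁻¹ * t * ∫⁻ x, f x) := by
        apply mul_le_mul_right
        exact ENNReal.tsum_le_tsum (fun r => mul_le_mul_right (hGr2 r) _)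
    _ = 4 * ((16 * 3^n * t * ∫⁻ x, f x) * ∑' r : ℕ, ((4:ℝ≥0∞)/3)^r * ((2^r : ℝ≥0∞))⁻¹) := by
        congr 1
        rw [← ENNReal.tsum_mul_left]
        apply tsum_congr
        intro r
        ring
    _ = 4 * ((16 * 3^n * t * ∫⁻ x, f x) * ∑' r : ℕ, ((2:ℝ≥0∞)/3)^r) := by
        congr 2
        apply tsum_congr
        intro r
        have h2inv : ((2:ℝ≥0∞)^r)⁻¹ = ((2:ℝ≥0∞)⁻¹)^r := by
          rw [ENNReal.inv_pow]
        rw [h2inv, ← mul_pow]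
        congr 1
        rw [div_eq_mul_inv, div_eq_mul_inv]
        calc (4:ℝ≥0∞) * 3⁻¹ * 2⁻¹ = (4 * 2⁻¹) * 3⁻¹ := by ring
        _ = 2 * 3⁻¹ := by
            congr 1
            calc (4:ℝ≥0∞) * 2⁻¹ = 2 * (2 * 2⁻¹) := by
                  rw [show (4:ℝ≥0∞) = 2 * 2 by norm_num]
                  ring
            _ = 2 := by rw [ENNReal.mul_inv_cancel (by norm_num) (by norm_num), mul_one]
    _ ≤ 4 * ((16 * 3^n * t * ∫⁻ x, f x) * 3) := by
        apply mul_le_mul_right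
        apply mul_le_mul_right
        rw [ENNReal.tsum_geometric]
        have hsum : (1:ℝ≥0∞) = 1/3 + 2/3 := by
          rw [ENNReal.div_add_div_same, show (1:ℝ≥0∞) + 2 = 3 by norm_num]
          exact (ENNReal.div_self (by norm_num) (by norm_num)).symm
        have hne : ((2:ℝ≥0∞)/3) ≠ ⊤ := by
          simp [ENNReal.div_eq_top]
        rw [ENNReal.sub_eq_of_eq_add hne hsum, one_div, inv_inv]
    _ = 192 * 3^n * t * ∫⁻ x, f x := by ring
  -- Chebyshev for the good part
  have hgood : t * volume {x | t/2 < Hf x} ≤ 768 * 3^n * ∫⁻ x, f x := by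
    have hsub : {x | t/2 < Hf x} ⊆ {x | (t/2)*(t/2) ≤ (Hf x)^2} := by
      intro x hx
      rw [Set.mem_setOf_eq, pow_two]
      exact mul_le_mul' (le_of_lt hx) (le_of_lt hx)
    have hcheb := mul_meas_ge_le_lintegral₀ (μ := volume) ((hHmeas.pow_const 2).aemeasurable) ((t/2)*(t/2))
    have h1 : (t/2)*(t/2) * volume {x | t/2 < Hf x} ≤ (192 * 3^n * ∫⁻ x, f x) * t := by
      calc (t/2)*(t/2) * volume {x | t/2 < Hf x}
          ≤ (t/2)*(t/2) * volume {x | (t/2)*(t/2) ≤ (Hf x)^2} :=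
            mul_le_mul_right (measure_mono hsub) _
      _ ≤ ∫⁻ x, (Hf x)^2 := hcheb
      _ ≤ 192 * 3^n * t * ∫⁻ x, f x := hH2
      _ = (192 * 3^n * ∫⁻ x, f x) * t := by ring
    have := cheb_helper ht0 htop h1
    calc t * volume {x | t/2 < Hf x} ≤ 4 * (192 * 3^n * ∫⁻ x, f x) := this
    _ = 768 * 3^n * ∫⁻ x, f x := by ring
  -- Chebyshev for the bad part
  have hbad : t * volume ({x | t/2 ≤ Bf x} ∩ Omᶜ) ≤ 2 * (((m:ℝ≥0∞) + 4) * ∫⁻ x, f x) := by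
    have hsub : {x | t/2 ≤ Bf x} ∩ Omᶜ ⊆ {x | t/2 ≤ (Omᶜ).indicator Bf x} := by
      intro x hx
      rw [Set.mem_setOf_eq, Set.indicator_of_mem hx.2]
      exact hx.1
    have hcheb := mul_meas_ge_le_lintegral₀ (μ := volume) ((hBmeas.indicator hOmmeas.compl).aemeasurable) (t/2)
    apply half_mul_helper htop
    calc (t/2) * volume ({x | t/2 ≤ Bf x} ∩ Omᶜ)
        ≤ (t/2) * volume {x | t/2 ≤ (Omᶜ).indicator Bf x} := mul_le_mul_right (measure_mono hsub) _
    _ ≤ ∫⁻ x, (Omᶜ).indicator Bf x := hcheb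
    _ ≤ ((m:ℝ≥0∞) + 4) * ∫⁻ x, f x := hBint
  -- set splitting
  have hsetsplit : {x | t < Astar Q R f x} ⊆
      ({x | t/2 < Hf x} ∪ ({x | t/2 ≤ Bf x} ∩ Omᶜ)) ∪ Om := by
    intro x hx
    rw [Set.mem_setOf_eq] at hx
    by_cases hxo : x ∈ Om
    · exact Set.mem_union_right _ hxo
    · apply Set.mem_union_left
      by_cases h2 : t/2 < Hf x
      · exact Set.mem_union_left _ h2
      · apply Set.mem_union_right
        refine ⟨?_, hxo⟩
        rw [Set.mem_setOf_eq]
        have h1 : t/2 + t/2 < Hf x + Bf x := by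
          rw [ENNReal.add_halves]
          exact lt_of_lt_of_le hx (hsplit x)
        have h3 : Hf x + Bf x ≤ t/2 + Bf x := add_le_add_left (not_lt.1 h2) _
        have h4 : t/2 + t/2 < t/2 + Bf x := lt_of_lt_of_le h1 h3
        exact le_of_lt ((ENNReal.add_lt_add_iff_left
          ((ENNReal.div_lt_top htop (by norm_num)).ne)).1 h4)
  -- final assembly
  calc t * volume {x | t < Astar Q R f x}
      ≤ t * (volume ({x | t/2 < Hf x} ∪ ({x | t/2 ≤ Bf x} ∩ Omᶜ)) + volume Om) := by
        apply mul_le_mul_right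
        exact le_trans (measure_mono hsetsplit) (measure_union_le _ _)
  _ ≤ t * ((volume {x | t/2 < Hf x} + volume ({x | t/2 ≤ Bf x} ∩ Omᶜ)) + volume Om) := by
        apply mul_le_mul_right
        exact add_le_add_left (measure_union_le _ _) _
  _ = t * volume {x | t/2 < Hf x} + t * volume ({x | t/2 ≤ Bf x} ∩ Omᶜ) + t * volume Om := by
        ring
  _ ≤ 768 * 3^n * (∫⁻ x, f x) + 2 * (((m:ℝ≥0∞) + 4) * ∫⁻ x, f x) + 3^n * ∫⁻ x, f x :=
        add_le_add (add_le_add hgood hbad) hOmvol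
  _ = (768 * 3^n + (2*(m:ℝ≥0∞) + 8) + 3^n) * ∫⁻ x, f x := by ring
  _ ≤ ((3^n * 2^11 : ℝ≥0) : ℝ≥0∞) * (m:ℝ≥0∞) * ∫⁻ x, f x := by
        apply mul_le_mul_left
        rw [hCcast]
        have hm1 : (1:ℝ≥0∞) ≤ (m:ℝ≥0∞) := by exact_mod_cast hm
        have h3n : (1:ℝ≥0∞) ≤ 3^n := one_le_pow₀ (by norm_num)
        have hb1 : (768:ℝ≥0∞) * 3^n ≤ 768 * 3^n * m :=
          le_mul_of_one_le_right (zero_le) hm1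
        have hb2 : 2*(m:ℝ≥0∞) + 8 ≤ 10 * m := by
          have h8 : (8:ℝ≥0∞) ≤ 8 * m := le_mul_of_one_le_right (zero_le) hm1
          calc 2*(m:ℝ≥0∞) + 8 ≤ 2*m + 8*m := add_le_add_right h8 _
          _ = 10 * m := by ring
        have hb2' : (10:ℝ≥0∞) * m ≤ 10 * (3^n * m) := by
          rw [← mul_assoc]
          exact mul_le_mul_left (le_mul_of_one_le_right (zero_le) h3n) _
        have hb3 : (3:ℝ≥0∞)^n ≤ 3^n * m := le_mul_of_one_le_right (zero_le) hm1
        calc 768 * (3:ℝ≥0∞)^n + (2*(m:ℝ≥0∞) + 8) + 3^n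
            ≤ 768 * 3^n * m + 10 * (3^n * m) + 3^n * m :=
              add_le_add (add_le_add hb1 (le_trans hb2 hb2')) hb3
        _ = 779 * (3^n * m) := by ring
        _ ≤ 2^11 * (3^n * m) := by
              apply mul_le_mul_left
              norm_num
        _ = 3^n * 2^11 * m := by ring
end

section
/- Suppose an operator S satisfies the weak-type bound ‖S g‖_{L^{1,∞}} ≤ A ‖g‖_{L¹}, and suppose for a cube Q and function f ≥ 0 there is a constant c with |S f − c| χ_Q ≤ S(f χ_Q) pointwise on Q. Then the local mean oscillation satisfies ω_λ(S f; Q) ≤ (A/λ) f_Q for every 0 < λ < 1, where f_Q = (1/|Q|)∫_Q f. -/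
open Set MeasureTheory ENNReal

/-- The cube `a + [0, ℓ)ⁿ`. -/
def cubeOf {n : ℕ} (a : Fin n → ℝ) (ℓ : ℝ) : Set (Fin n → ℝ) :=
  {y | ∀ i, a i ≤ y i ∧ y i < a i + ℓ}

/-- The non-increasing rearrangement `g^*(t) = inf{s > 0 : |{|g| > s}| ≤ t}`. -/
noncomputable def rearr {n : ℕ} (g : (Fin n → ℝ) → ℝ) (t : ℝ) : ℝ :=
  sInf {s : ℝ | 0 < s ∧ volume {x | s < |g x|} ≤ ENNReal.ofReal t}

/-- The local mean oscillation `ω_λ(g; Q) = inf_{c ∈ ℝ} ((g − c)χ_Q)^*(λ|Q|)`. -/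
noncomputable def oscLam {n : ℕ} (lam : ℝ) (g : (Fin n → ℝ) → ℝ)
    (Q : Set (Fin n → ℝ)) : ℝ :=
  ⨅ c : ℝ, rearr (Q.indicator fun y => g y - c) (lam * (volume Q).toReal)

/-- If `S` satisfies the weak-type bound `‖Sg‖_{L^{1,∞}} ≤ A‖g‖_{L¹}` and there is a constant
`c` with `|Sf − c| χ_Q ≤ S(f χ_Q)` on the cube `Q` for `f ≥ 0`, then
`ω_λ(Sf; Q) ≤ (A/λ) f_Q` for every `0 < λ < 1`. -/
theorem stmt16 {n : ℕ} (S : ((Fin n → ℝ) → ℝ) → ((Fin n → ℝ) → ℝ)) (A : ℝ) (hA : 0 < A)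
    (hweak : ∀ g, Integrable g → ∀ t : ℝ, 0 < t →
      ENNReal.ofReal t * volume {x | t < |S g x|} ≤ ENNReal.ofReal (A * ∫ x, |g x|))
    (a : Fin n → ℝ) (ℓ : ℝ) (hℓ : 0 < ℓ)
    (f : (Fin n → ℝ) → ℝ) (hf0 : ∀ x, 0 ≤ f x) (hfi : IntegrableOn f (cubeOf a ℓ))
    (c : ℝ) (hdom : ∀ x ∈ cubeOf a ℓ, |S f x - c| ≤ S ((cubeOf a ℓ).indicator f) x)
    (lam : ℝ) (hlam0 : 0 < lam) (hlam1 : lam < 1) :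
    oscLam lam (S f) (cubeOf a ℓ) ≤
      (A / lam) * ((∫ x in cubeOf a ℓ, f x) / (volume (cubeOf a ℓ)).toReal) := by
  set Q := cubeOf a ℓ with hQdef
  have hQeq : Q = Set.pi Set.univ (fun i => Set.Ico (a i) (a i + ℓ)) := by
    ext y; simp [hQdef, cubeOf, Set.mem_pi, Set.mem_Ico]
  have hQm : MeasurableSet Q := by
    rw [hQeq]; exact MeasurableSet.univ_pi fun i => measurableSet_Ico
  have hvol : volume Q = ENNReal.ofReal ℓ ^ n := by
    rw [hQeq, volume_pi_pi]; simp [Real.volume_Ico]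
  set L : ℝ := (volume Q).toReal with hLdef
  have hLpos : 0 < L := by
    rw [hLdef, hvol, ENNReal.toReal_pow, ENNReal.toReal_ofReal hℓ.le]
    positivity
  set I : ℝ := ∫ x in Q, f x with hIdef
  have hI0 : 0 ≤ I := setIntegral_nonneg hQm fun x _ => hf0 x
  set M : ℝ := (A / lam) * (I / L) with hMdef
  have hM0 : 0 ≤ M :=
    mul_nonneg (div_nonneg hA.le hlam0.le) (div_nonneg hI0 hLpos.le)
  have hint : Integrable (Q.indicator f) := (integrable_indicator_iff hQm).mpr hfi
  have hAI : ∫ x, |Q.indicator f x| = I := by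
    have h1 : (fun x => |Q.indicator f x|) = Q.indicator (fun x => |f x|) := by
      ext x; by_cases h : x ∈ Q <;> simp [h]
    rw [h1, integral_indicator hQm, hIdef]
    exact setIntegral_congr_fun hQm fun x _ => abs_of_nonneg (hf0 x)
  have key : rearr (Q.indicator fun y => S f y - c) (lam * L) ≤ M := by
    apply _root_.le_of_forall_pos_le_add
    intro ε hε
    apply csInf_le ⟨0, fun x hx => hx.1.le⟩
    set s : ℝ := M + ε with hsdef
    have hs : 0 < s := by positivity
    constructor
    · exact hs
    · have hsub : {x | s < |Q.indicator (fun y => S f y - c) x|} ⊆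
          {x | s < |S (Q.indicator f) x|} := by
        intro x hx
        simp only [Set.mem_setOf_eq] at hx ⊢
        by_cases hxQ : x ∈ Q
        · rw [Set.indicator_of_mem hxQ] at hx
          calc s < |S f x - c| := hx
            _ ≤ S (Q.indicator f) x := hdom x hxQ
            _ ≤ |S (Q.indicator f) x| := le_abs_self _
        · rw [Set.indicator_of_notMem hxQ] at hx
          simp at hx; linarith
      have hw := hweak _ hint s hs
      rw [hAI] at hw
      have hV : volume {x | s < |S (Q.indicator f) x|} ≤
          ENNReal.ofReal ((A * I) / s) := by
        rw [ENNReal.ofReal_div_of_pos hs, ENNReal.le_div_iff_mul_le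
          (Or.inl (by simp only [ne_eq, ENNReal.ofReal_eq_zero, not_le]; exact hs))
          (Or.inl ENNReal.ofReal_ne_top)]
        rw [mul_comm]; exact hw
      have h3 : (A * I) / s ≤ lam * L := by
        rw [div_le_iff₀ hs]
        have hMI : A * I = M * (lam * L) := by
          rw [hMdef]; field_simp
        nlinarith [mul_pos hlam0 hLpos]
      calc volume {x | s < |Q.indicator (fun y => S f y - c) x|}
          ≤ volume {x | s < |S (Q.indicator f) x|} := measure_mono hsub
        _ ≤ ENNReal.ofReal ((A * I) / s) := hV
        _ ≤ ENNReal.ofReal (lam * L) := ENNReal.ofReal_le_ofReal h3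
  calc oscLam lam (S f) Q
      ≤ rearr (Q.indicator fun y => S f y - c) (lam * L) := by
        apply ciInf_le_of_le ⟨0, ?_⟩ c le_rfl
        rintro x ⟨c', rfl⟩
        exact Real.sInf_nonneg fun y hy => hy.1.le
    _ ≤ M := key
end

section
/- For any locally integrable f ≥ 0 on ℝⁿ, the pointwise bound M f(x) ≤ 6ⁿ Σ_{α ∈ {0,1/3}ⁿ} M^{D_α} f(x) holds, where M is the Hardy–Littlewood maximal operator over all cubes and M^{D_α} is the maximal operator restricted to the shifted dyadic grid D_α. -/
open Set MeasureTheory ENNReal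

/-- The average `(1/|S|) ∫_S f` of a nonnegative function, as an extended real. -/
noncomputable def eavg {n : ℕ} (f : (Fin n → ℝ) → ℝ) (S : Set (Fin n → ℝ)) : ℝ≥0∞ :=
  (∫⁻ x in S, ENNReal.ofReal (f x)) / volume S

/-- The Hardy–Littlewood maximal operator over all cubes. -/
noncomputable def MHL {n : ℕ} (f : (Fin n → ℝ) → ℝ) (x : Fin n → ℝ) : ℝ≥0∞ :=
  ⨆ (a : Fin n → ℝ) (ℓ : ℝ) (_ : 0 < ℓ) (_ : x ∈ cubeOf a ℓ), eavg f (cubeOf a ℓ)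

/-- The maximal operator restricted to the shifted dyadic grid `D_α`. -/
noncomputable def MDα {n : ℕ} (α : Fin n → ℝ) (f : (Fin n → ℝ) → ℝ) (x : Fin n → ℝ) :
    ℝ≥0∞ :=
  ⨆ (k : ℤ) (j : Fin n → ℤ) (_ : x ∈ sCube α k j), eavg f (sCube α k j)

/-- One-dimensional one-third trick. -/
lemma oneDim (δ a ℓ : ℝ) (hℓ : 0 < ℓ) (hδ : 3*ℓ ≤ δ) :
    ∃ (m : ℤ) (c : Bool), δ*(m + (if c then (1:ℝ)/3 else 0)) ≤ a ∧
      a + ℓ ≤ δ*(m + 1 + (if c then (1:ℝ)/3 else 0)) := by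
  have hδ0 : 0 < δ := by linarith
  set m := ⌊a/δ⌋ with hm
  have h1 : (m:ℝ) ≤ a/δ := Int.floor_le _
  have h2 : a/δ < m + 1 := Int.lt_floor_add_one _
  have h1' : δ * m ≤ a := by
    have := mul_le_mul_of_nonneg_left h1 hδ0.le
    rwa [mul_div_cancel₀ _ hδ0.ne'] at this
  have h2' : a < δ * (m + 1) := by
    have := mul_lt_mul_of_pos_left h2 hδ0
    rwa [mul_div_cancel₀ _ hδ0.ne'] at this
  by_cases hc : a + ℓ ≤ δ*(m+1)
  · exact ⟨m, false, by simpa using h1', by simpa using hc⟩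
  · push_neg at hc
    refine ⟨m, true, ?_, ?_⟩
    · simp only [if_true]
      nlinarith
    · simp only [if_true]
      nlinarith

lemma eavg_le_of_subset {n : ℕ} (f : (Fin n → ℝ) → ℝ) (S T : Set (Fin n → ℝ))
    (hST : S ⊆ T) (C : ℝ≥0∞) (hC0 : C ≠ 0) (hC : C ≠ ∞)
    (hvol : volume T ≤ C * volume S) : eavg f S ≤ C * eavg f T := by
  unfold eavg
  calc (∫⁻ x in S, ENNReal.ofReal (f x)) / volume S
      ≤ (∫⁻ x in T, ENNReal.ofReal (f x)) / volume S :=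
        ENNReal.div_le_div (lintegral_mono_set hST) le_rfl
    _ = C * (∫⁻ x in T, ENNReal.ofReal (f x)) / (C * volume S) :=
        (ENNReal.mul_div_mul_left _ _ hC0 hC).symm
    _ = C * ((∫⁻ x in T, ENNReal.ofReal (f x)) / (C * volume S)) := by
        rw [mul_div_assoc]
    _ ≤ C * ((∫⁻ x in T, ENNReal.ofReal (f x)) / volume T) :=
        mul_le_mul_right (ENNReal.div_le_div le_rfl hvol) _

/-- For any locally integrable `f ≥ 0` on `ℝⁿ`,
`Mf(x) ≤ 6ⁿ Σ_{α ∈ {0,1/3}ⁿ} M^{D_α} f(x)` pointwise. -/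
theorem stmt18 {n : ℕ} (f : (Fin n → ℝ) → ℝ) (hf : LocallyIntegrable f)
    (hf0 : ∀ x, 0 ≤ f x) (x : Fin n → ℝ) :
    MHL f x ≤ 6^n * ∑ b : Fin n → Bool,
      MDα (fun i => if b i then (1:ℝ)/3 else 0) f x := by
  rw [MHL]
  refine iSup_le fun a => iSup_le fun ℓ => iSup_le fun hℓ => iSup_le fun hx => ?_
  -- choose the dyadic scale
  set c : ℝ := Real.logb 2 (3*ℓ) with hcdef
  set k : ℤ := -⌈c⌉ with hkdef
  set δ : ℝ := (2:ℝ)^(-k) with hδdef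
  have h3ℓ : (0:ℝ) < 3*ℓ := by linarith
  have hδr : δ = (2:ℝ)^((⌈c⌉:ℤ):ℝ) := by
    rw [hδdef, hkdef, neg_neg, Real.rpow_intCast]
  have hδ1 : 3*ℓ ≤ δ := by
    rw [hδr]
    calc 3*ℓ = (2:ℝ)^c := (Real.rpow_logb two_pos (by norm_num) h3ℓ).symm
      _ ≤ _ := Real.rpow_le_rpow_of_exponent_le one_le_two (Int.le_ceil c)
  have hδ2 : δ ≤ 6*ℓ := by
    rw [hδr]
    have : ((⌈c⌉:ℤ):ℝ) ≤ c + 1 := by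
      have := Int.ceil_lt_add_one c; linarith
    calc (2:ℝ)^((⌈c⌉:ℤ):ℝ) ≤ (2:ℝ)^(c+1) :=
          Real.rpow_le_rpow_of_exponent_le one_le_two this
      _ = (2:ℝ)^c * 2 := by rw [Real.rpow_add two_pos, Real.rpow_one]
      _ = 6*ℓ := by rw [Real.rpow_logb two_pos (by norm_num) h3ℓ]; ring
  have hδ0 : 0 < δ := by linarith
  -- per coordinate choice
  have H : ∀ i : Fin n, ∃ (m : ℤ) (cc : Bool),
      δ*(m + (if cc then (1:ℝ)/3 else 0)) ≤ a i ∧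
      a i + ℓ ≤ δ*(m + 1 + (if cc then (1:ℝ)/3 else 0)) :=
    fun i => oneDim δ (a i) ℓ hℓ hδ1
  choose j b hb1 hb2 using H
  set α : Fin n → ℝ := fun i => if b i then (1:ℝ)/3 else 0 with hα
  -- inclusion
  have hsub : cubeOf a ℓ ⊆ sCube α k j := by
    intro y hy i
    have h1 := (hy i).1
    have h2 := (hy i).2
    constructor
    · calc (2:ℝ)^(-k) * ((j i : ℝ) + α i) = δ*(j i + α i) := by rw [hδdef]
        _ ≤ a i := hb1 i
        _ ≤ y i := h1
    · calc y i < a i + ℓ := h2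
        _ ≤ δ*(j i + 1 + α i) := hb2 i
        _ = (2:ℝ)^(-k) * ((j i : ℝ) + 1 + α i) := by rw [hδdef]
  have hxS : x ∈ sCube α k j := hsub hx
  -- volumes
  have hcubeEq : cubeOf a ℓ = Set.pi univ fun i => Ico (a i) (a i + ℓ) := by
    ext y; simp [cubeOf, Set.mem_pi, mem_Ico]
  have hcubeVol : volume (cubeOf a ℓ) = ENNReal.ofReal ℓ ^ n := by
    rw [hcubeEq, volume_pi_pi]
    simp [Real.volume_Ico]
  have hsEq : sCube α k j = Set.pi univ fun i =>
      Ico ((2:ℝ)^(-k) * ((j i : ℝ) + α i)) ((2:ℝ)^(-k) * ((j i : ℝ) + 1 + α i)) := by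
    ext y; simp [sCube, Set.mem_pi, mem_Ico]
  have hsVol : volume (sCube α k j) = ENNReal.ofReal δ ^ n := by
    rw [hsEq, volume_pi_pi]
    have : ∀ i : Fin n, (2:ℝ)^(-k) * ((j i : ℝ) + 1 + α i)
        - (2:ℝ)^(-k) * ((j i : ℝ) + α i) = δ := by
      intro i; rw [hδdef]; ring
    simp only [Real.volume_Ico, this]
    simp
  have hvol : volume (sCube α k j) ≤ (6:ℝ≥0∞)^n * volume (cubeOf a ℓ) := by
    rw [hsVol, hcubeVol, ← mul_pow]
    refine pow_le_pow_left' ?_ n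
    calc ENNReal.ofReal δ ≤ ENNReal.ofReal (6*ℓ) := ENNReal.ofReal_le_ofReal hδ2
      _ = ENNReal.ofReal 6 * ENNReal.ofReal ℓ := ENNReal.ofReal_mul (by norm_num)
      _ = 6 * ENNReal.ofReal ℓ := by norm_num
  have hC0 : ((6:ℝ≥0∞)^n) ≠ 0 := by positivity
  have hCtop : ((6:ℝ≥0∞)^n) ≠ ∞ := by
    exact pow_ne_top (by norm_num)
  calc eavg f (cubeOf a ℓ)
      ≤ (6:ℝ≥0∞)^n * eavg f (sCube α k j) :=
        eavg_le_of_subset f _ _ hsub _ hC0 hCtop hvol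
    _ ≤ (6:ℝ≥0∞)^n * MDα α f x := by
        refine mul_le_mul_right ?_ _
        exact le_iSup_of_le k (le_iSup_of_le j (le_iSup_of_le hxS le_rfl))
    _ ≤ 6^n * ∑ b' : Fin n → Bool,
          MDα (fun i => if b' i then (1:ℝ)/3 else 0) f x := by
        refine mul_le_mul_right ?_ _
        exact Finset.single_le_sum (f := fun b' : Fin n → Bool =>
          MDα (fun i => if b' i then (1:ℝ)/3 else 0) f x)
          (fun _ _ => zero_le) (Finset.mem_univ b)
end
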